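/- arXiv:2307.06535 — 3 statements merged into one kernel-verified Lean document; each statement's English description precedes it below -/
import Mathlib

section
/- If t is a C-tensor with support ⟨e,h,ℓ⟩ whose components are all isomorphic to ⟨m,n,p⟩, and t' is a C-tensor with support ⟨e',h',ℓ'⟩ whose components are all isomorphic to ⟨m',n',p'⟩, then t ⊗ t' is a C-tensor with support ⟨ee',hh',ℓℓ'⟩ whose components are all isomorphic to ⟨mm',nn',pp'⟩. -/
open Finset in
/-- A tensor over `F` is given by its coordinate array with respect to fixed
bases of the three spaces. -/
abbrev Tensor (F : Type*) (ι₁ ι₂ ι₃ : Type*) := ι₁ → ι₂ → ι₃ → F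

/-- Tensor (Kronecker) product of two tensors. -/
def tmul {F : Type*} [Field F] {ι₁ ι₂ ι₃ κ₁ κ₂ κ₃ : Type*}
    (t : Tensor F ι₁ ι₂ ι₃) (t' : Tensor F κ₁ κ₂ κ₃) :
    Tensor F (ι₁ × κ₁) (ι₂ × κ₂) (ι₃ × κ₃) :=
  fun a b c => t a.1 b.1 c.1 * t' a.2 b.2 c.2

/-- `t` is a degeneration of `r·⟨1,1,1⟩`: there are `r`-term families of vectors
with entries polynomial in an indeterminate `ε` such that
`∑_l u_l ⊗ v_l ⊗ w_l = ε^h · t + O(ε^{h+1})`. -/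
def BorderDecomp {F : Type*} [Field F] {ι₁ ι₂ ι₃ : Type*}
    [Fintype ι₁] [Fintype ι₂] [Fintype ι₃]
    (t : Tensor F ι₁ ι₂ ι₃) (r : ℕ) : Prop :=
  ∃ (h : ℕ) (u : Fin r → ι₁ → Polynomial F) (v : Fin r → ι₂ → Polynomial F)
    (w : Fin r → ι₃ → Polynomial F), ∀ i j k,
      (∀ m < h, (∑ l, u l i * v l j * w l k).coeff m = 0) ∧
      (∑ l, u l i * v l j * w l k).coeff h = t i j k

/-- The border rank of a tensor. -/
noncomputable def borderRank {F : Type*} [Field F] {ι₁ ι₂ ι₃ : Type*}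
    [Fintype ι₁] [Fintype ι₂] [Fintype ι₃] (t : Tensor F ι₁ ι₂ ι₃) : ℕ :=
  sInf {r | BorderDecomp t r}

/-- Two tensors are isomorphic if one is obtained from the other by invertible
linear changes of basis in each of the three factors. -/
def TIso {F : Type*} [Field F] {ι₁ ι₂ ι₃ κ₁ κ₂ κ₃ : Type*}
    [Fintype ι₁] [Fintype ι₂] [Fintype ι₃] [Fintype κ₁] [Fintype κ₂] [Fintype κ₃]
    [DecidableEq ι₁] [DecidableEq ι₂] [DecidableEq ι₃]
    [DecidableEq κ₁] [DecidableEq κ₂] [DecidableEq κ₃]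
    (t : Tensor F ι₁ ι₂ ι₃) (t' : Tensor F κ₁ κ₂ κ₃) : Prop :=
  ∃ (A : Matrix κ₁ ι₁ F) (A' : Matrix ι₁ κ₁ F) (B : Matrix κ₂ ι₂ F)
    (B' : Matrix ι₂ κ₂ F) (C : Matrix κ₃ ι₃ F) (C' : Matrix ι₃ κ₃ F),
    A * A' = 1 ∧ A' * A = 1 ∧ B * B' = 1 ∧ B' * B = 1 ∧ C * C' = 1 ∧ C' * C = 1 ∧
    ∀ a b c, t' a b c = ∑ i, ∑ j, ∑ k, A a i * B b j * C c k * t i j k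

/-- The matrix multiplication tensor `⟨m,n,p⟩ = ∑ x_{rs} ⊗ y_{st} ⊗ z_{rt}`. -/
def MM (F : Type*) [Field F] (m n p : ℕ) :
    Tensor F (Fin m × Fin n) (Fin n × Fin p) (Fin m × Fin p) :=
  fun a b c => if a.1 = c.1 ∧ a.2 = b.1 ∧ b.2 = c.2 then 1 else 0

/-- `t` is a C-tensor with support `⟨|E|,|H|,|L|⟩` whose components are all
isomorphic to `⟨m,n,p⟩`: the three spaces decompose as
`U = ⊕_{i,j} U_{i,j}`, `V = ⊕_{j,k} V_{j,k}`, `W = ⊕_{i,k} W_{i,k}`,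
the piece of `t` in `U_{i,j} ⊗ V_{j',k} ⊗ W_{i',k'}` vanishes unless
`i = i'`, `j = j'`, `k = k'`, and each component `t_{ijk}` is isomorphic
to the matrix multiplication tensor `⟨m,n,p⟩`. -/
def IsCTensor (F : Type*) [Field F] {E H L : Type*}
    [Fintype E] [Fintype H] [Fintype L] [DecidableEq E] [DecidableEq H] [DecidableEq L]
    (m n p : ℕ) (ιU : E → H → Type*) (ιV : H → L → Type*) (ιW : E → L → Type*)
    [∀ i j, Fintype (ιU i j)] [∀ i j, DecidableEq (ιU i j)]
    [∀ j k, Fintype (ιV j k)] [∀ j k, DecidableEq (ιV j k)]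
    [∀ i k, Fintype (ιW i k)] [∀ i k, DecidableEq (ιW i k)]
    (t : Tensor F ((i : E) × (j : H) × ιU i j) ((j : H) × (k : L) × ιV j k)
      ((i : E) × (k : L) × ιW i k)) : Prop :=
  (∀ x : (i : E) × (j : H) × ιU i j, ∀ y : (j : H) × (k : L) × ιV j k,
      ∀ z : (i : E) × (k : L) × ιW i k,
      ¬(x.1 = z.1 ∧ x.2.1 = y.1 ∧ y.2.1 = z.2.1) → t x y z = 0) ∧
  (∀ (i : E) (j : H) (k : L),
    TIso (fun (u : ιU i j) (v : ιV j k) (w : ιW i k) => t ⟨i, j, u⟩ ⟨j, k, v⟩ ⟨i, k, w⟩)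
      (MM F m n p))


section Aux

open Finset Kronecker

variable {F : Type*} [Field F]

private lemma tsum_flat {ι₁ ι₂ ι₃ : Type*} [Fintype ι₁] [Fintype ι₂] [Fintype ι₃]
    (f : ι₁ → ι₂ → ι₃ → F) :
    ∑ i, ∑ j, ∑ k, f i j k = ∑ x : ι₁ × ι₂ × ι₃, f x.1 x.2.1 x.2.2 := by
  simp [Fintype.sum_prod_type]

private lemma key_sum {α β γ : Type*} [Fintype α] [Fintype β] [Fintype γ]
    (f₁ g₁ : α → F) (f₂ g₂ : β → F) (f₃ g₃ : γ → F) (z : F) :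
    ∑ q : α × β × γ, f₁ q.1 * f₂ q.2.1 * f₃ q.2.2 * (g₁ q.1 * g₂ q.2.1 * g₃ q.2.2 * z)
      = (∑ a, f₁ a * g₁ a) * (∑ b, f₂ b * g₂ b) * (∑ c, f₃ c * g₃ c) * z := by
  calc ∑ q : α × β × γ, f₁ q.1 * f₂ q.2.1 * f₃ q.2.2 * (g₁ q.1 * g₂ q.2.1 * g₃ q.2.2 * z)
      = ∑ a, ∑ b, ∑ c, f₁ a * f₂ b * f₃ c * (g₁ a * g₂ b * g₃ c * z) :=
        (tsum_flat fun a b c => f₁ a * f₂ b * f₃ c * (g₁ a * g₂ b * g₃ c * z)).symm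
    _ = ∑ a, (f₁ a * g₁ a) * (∑ b, (f₂ b * g₂ b) * (∑ c, (f₃ c * g₃ c) * z)) := by
        simp only [Finset.mul_sum]
        exact Finset.sum_congr rfl fun a _ => Finset.sum_congr rfl fun b _ =>
          Finset.sum_congr rfl fun c _ => by ring
    _ = (∑ a, f₁ a * g₁ a) * (∑ b, f₂ b * g₂ b) * (∑ c, f₃ c * g₃ c) * z := by
        rw [← Finset.sum_mul, ← Finset.sum_mul, ← Finset.sum_mul]
        ring

private lemma tiso_trans {ι₁ ι₂ ι₃ κ₁ κ₂ κ₃ μ₁ μ₂ μ₃ : Type*}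
    [Fintype ι₁] [Fintype ι₂] [Fintype ι₃] [Fintype κ₁] [Fintype κ₂] [Fintype κ₃]
    [Fintype μ₁] [Fintype μ₂] [Fintype μ₃]
    [DecidableEq ι₁] [DecidableEq ι₂] [DecidableEq ι₃]
    [DecidableEq κ₁] [DecidableEq κ₂] [DecidableEq κ₃]
    [DecidableEq μ₁] [DecidableEq μ₂] [DecidableEq μ₃]
    {t : Tensor F ι₁ ι₂ ι₃} {t' : Tensor F κ₁ κ₂ κ₃} {t'' : Tensor F μ₁ μ₂ μ₃}
    (h₁ : TIso t t') (h₂ : TIso t' t'') : TIso t t'' := by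
  obtain ⟨A₁, A₁', B₁, B₁', C₁, C₁', hA₁, hA₁', hB₁, hB₁', hC₁, hC₁', hs₁⟩ := h₁
  obtain ⟨A₂, A₂', B₂, B₂', C₂, C₂', hA₂, hA₂', hB₂, hB₂', hC₂, hC₂', hs₂⟩ := h₂
  refine ⟨A₂ * A₁, A₁' * A₂', B₂ * B₁, B₁' * B₂', C₂ * C₁, C₁' * C₂',
    ?_, ?_, ?_, ?_, ?_, ?_, ?_⟩
  · rw [Matrix.mul_assoc, ← Matrix.mul_assoc A₁, hA₁, Matrix.one_mul, hA₂]
  · rw [Matrix.mul_assoc, ← Matrix.mul_assoc A₂', hA₂', Matrix.one_mul, hA₁']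
  · rw [Matrix.mul_assoc, ← Matrix.mul_assoc B₁, hB₁, Matrix.one_mul, hB₂]
  · rw [Matrix.mul_assoc, ← Matrix.mul_assoc B₂', hB₂', Matrix.one_mul, hB₁']
  · rw [Matrix.mul_assoc, ← Matrix.mul_assoc C₁, hC₁, Matrix.one_mul, hC₂]
  · rw [Matrix.mul_assoc, ← Matrix.mul_assoc C₂', hC₂', Matrix.one_mul, hC₁']
  intro a b c
  rw [hs₂ a b c]
  calc ∑ i, ∑ j, ∑ k, A₂ a i * B₂ b j * C₂ c k * t' i j k
      = ∑ q : κ₁ × κ₂ × κ₃, A₂ a q.1 * B₂ b q.2.1 * C₂ c q.2.2 * t' q.1 q.2.1 q.2.2 :=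
        tsum_flat _
    _ = ∑ q : κ₁ × κ₂ × κ₃, ∑ r : ι₁ × ι₂ × ι₃,
          A₂ a q.1 * B₂ b q.2.1 * C₂ c q.2.2 *
            (A₁ q.1 r.1 * B₁ q.2.1 r.2.1 * C₁ q.2.2 r.2.2 * t r.1 r.2.1 r.2.2) := by
        refine Finset.sum_congr rfl fun q _ => ?_
        rw [hs₁, tsum_flat, Finset.mul_sum]
    _ = ∑ r : ι₁ × ι₂ × ι₃, ∑ q : κ₁ × κ₂ × κ₃,
          A₂ a q.1 * B₂ b q.2.1 * C₂ c q.2.2 *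
            (A₁ q.1 r.1 * B₁ q.2.1 r.2.1 * C₁ q.2.2 r.2.2 * t r.1 r.2.1 r.2.2) :=
        Finset.sum_comm
    _ = ∑ r : ι₁ × ι₂ × ι₃, (A₂ * A₁) a r.1 * (B₂ * B₁) b r.2.1 * (C₂ * C₁) c r.2.2 *
          t r.1 r.2.1 r.2.2 := by
        refine Finset.sum_congr rfl fun r _ => ?_
        rw [Matrix.mul_apply, Matrix.mul_apply, Matrix.mul_apply]
        exact key_sum (A₂ a) (fun x => A₁ x r.1) (B₂ b) (fun x => B₁ x r.2.1)
          (C₂ c) (fun x => C₁ x r.2.2) (t r.1 r.2.1 r.2.2)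
    _ = ∑ i, ∑ j, ∑ k, (A₂ * A₁) a i * (B₂ * B₁) b j * (C₂ * C₁) c k * t i j k :=
        (tsum_flat fun i j k => (A₂ * A₁) a i * (B₂ * B₁) b j * (C₂ * C₁) c k * t i j k).symm

private lemma tiso_tmul {ι₁ ι₂ ι₃ κ₁ κ₂ κ₃ ι₁' ι₂' ι₃' κ₁' κ₂' κ₃' : Type*}
    [Fintype ι₁] [Fintype ι₂] [Fintype ι₃] [Fintype κ₁] [Fintype κ₂] [Fintype κ₃]
    [Fintype ι₁'] [Fintype ι₂'] [Fintype ι₃'] [Fintype κ₁'] [Fintype κ₂'] [Fintype κ₃']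
    [DecidableEq ι₁] [DecidableEq ι₂] [DecidableEq ι₃]
    [DecidableEq κ₁] [DecidableEq κ₂] [DecidableEq κ₃]
    [DecidableEq ι₁'] [DecidableEq ι₂'] [DecidableEq ι₃']
    [DecidableEq κ₁'] [DecidableEq κ₂'] [DecidableEq κ₃']
    {t : Tensor F ι₁ ι₂ ι₃} {s : Tensor F κ₁ κ₂ κ₃}
    {t' : Tensor F ι₁' ι₂' ι₃'} {s' : Tensor F κ₁' κ₂' κ₃'}
    (h : TIso t s) (h' : TIso t' s') : TIso (tmul t t') (tmul s s') := by
  obtain ⟨A, A', B, B', C, C', hA, hA', hB, hB', hC, hC', hs⟩ := h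
  obtain ⟨D, D', E, E', G, G', hD, hD', hE, hE', hG, hG', hs'⟩ := h'
  refine ⟨A ⊗ₖ D, A' ⊗ₖ D', B ⊗ₖ E, B' ⊗ₖ E', C ⊗ₖ G, C' ⊗ₖ G', ?_, ?_, ?_, ?_, ?_, ?_, ?_⟩
  · rw [← Matrix.mul_kronecker_mul, hA, hD, Matrix.one_kronecker_one]
  · rw [← Matrix.mul_kronecker_mul, hA', hD', Matrix.one_kronecker_one]
  · rw [← Matrix.mul_kronecker_mul, hB, hE, Matrix.one_kronecker_one]
  · rw [← Matrix.mul_kronecker_mul, hB', hE', Matrix.one_kronecker_one]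
  · rw [← Matrix.mul_kronecker_mul, hC, hG, Matrix.one_kronecker_one]
  · rw [← Matrix.mul_kronecker_mul, hC', hG', Matrix.one_kronecker_one]
  intro a b c
  show s a.1 b.1 c.1 * s' a.2 b.2 c.2 = _
  rw [hs a.1 b.1 c.1, hs' a.2 b.2 c.2, tsum_flat, tsum_flat, tsum_flat,
    Finset.sum_mul_sum, ← Fintype.sum_prod_type']
  refine Fintype.sum_equiv
    (⟨fun x => ((x.1.1, x.2.1), ((x.1.2.1, x.2.2.1), (x.1.2.2, x.2.2.2))),
      fun y => ((y.1.1, y.2.1.1, y.2.2.1), (y.1.2, y.2.1.2, y.2.2.2)),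
      fun x => rfl, fun y => rfl⟩ :
      ((ι₁ × ι₂ × ι₃) × (ι₁' × ι₂' × ι₃')) ≃ ((ι₁ × ι₁') × (ι₂ × ι₂') × (ι₃ × ι₃')))
    _ _ fun x => ?_
  simp only [Equiv.coe_fn_mk, Matrix.kroneckerMap_apply, tmul]
  ring

private lemma perm_mul_left {ι κ : Type*} [Fintype ι] [Fintype κ]
    [DecidableEq ι] [DecidableEq κ] (e : κ ≃ ι) :
    (Matrix.of fun a i => if e a = i then (1 : F) else 0) *
      (Matrix.of fun i a => if e a = i then (1 : F) else 0) = 1 := by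
  ext a a'
  rw [Matrix.mul_apply]
  simp only [Matrix.of_apply, ite_mul, one_mul, zero_mul, Finset.sum_ite_eq,
    Finset.mem_univ, if_true, Matrix.one_apply, e.injective.eq_iff]
  by_cases hh : a = a'
  · simp [hh]
  · simp [hh, Ne.symm hh]

private lemma perm_mul_right {ι κ : Type*} [Fintype ι] [Fintype κ]
    [DecidableEq ι] [DecidableEq κ] (e : κ ≃ ι) :
    (Matrix.of fun i a => if e a = i then (1 : F) else 0) *
      (Matrix.of fun a i => if e a = i then (1 : F) else 0) = 1 := by
  ext i i'
  rw [Matrix.mul_apply]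
  simp only [Matrix.of_apply, ite_mul, one_mul, zero_mul]
  rw [Equiv.sum_comp e (fun x => if x = i then (if x = i' then (1 : F) else 0) else 0)]
  simp [Finset.sum_ite_eq', Matrix.one_apply]

private lemma tiso_of_equiv {ι₁ ι₂ ι₃ κ₁ κ₂ κ₃ : Type*}
    [Fintype ι₁] [Fintype ι₂] [Fintype ι₃] [Fintype κ₁] [Fintype κ₂] [Fintype κ₃]
    [DecidableEq ι₁] [DecidableEq ι₂] [DecidableEq ι₃]
    [DecidableEq κ₁] [DecidableEq κ₂] [DecidableEq κ₃]
    {t : Tensor F ι₁ ι₂ ι₃} {t' : Tensor F κ₁ κ₂ κ₃}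
    (e₁ : κ₁ ≃ ι₁) (e₂ : κ₂ ≃ ι₂) (e₃ : κ₃ ≃ ι₃)
    (h : ∀ a b c, t' a b c = t (e₁ a) (e₂ b) (e₃ c)) : TIso t t' := by
  refine ⟨Matrix.of fun a i => if e₁ a = i then 1 else 0,
    Matrix.of fun i a => if e₁ a = i then 1 else 0,
    Matrix.of fun b j => if e₂ b = j then 1 else 0,
    Matrix.of fun j b => if e₂ b = j then 1 else 0,
    Matrix.of fun c k => if e₃ c = k then 1 else 0,
    Matrix.of fun k c => if e₃ c = k then 1 else 0, perm_mul_left e₁, perm_mul_right e₁,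
    perm_mul_left e₂, perm_mul_right e₂, perm_mul_left e₃, perm_mul_right e₃, ?_⟩
  · intro a b c
    rw [h a b c]
    simp [ite_mul, Finset.sum_ite_eq, Finset.mem_univ]

private def splitEquiv (M M' N N' : ℕ) :
    Fin (M * M') × Fin (N * N') ≃ (Fin M × Fin N) × (Fin M' × Fin N') where
  toFun a := (((finProdFinEquiv.symm a.1).1, (finProdFinEquiv.symm a.2).1),
    ((finProdFinEquiv.symm a.1).2, (finProdFinEquiv.symm a.2).2))
  invFun x := (finProdFinEquiv (x.1.1, x.2.1), finProdFinEquiv (x.1.2, x.2.2))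
  left_inv a := by
    show (finProdFinEquiv ((finProdFinEquiv.symm a.1).1, (finProdFinEquiv.symm a.1).2),
      finProdFinEquiv ((finProdFinEquiv.symm a.2).1, (finProdFinEquiv.symm a.2).2)) = a
    rw [Prod.mk.eta, Prod.mk.eta, Equiv.apply_symm_apply, Equiv.apply_symm_apply]
  right_inv x := by
    show (((finProdFinEquiv.symm (finProdFinEquiv (x.1.1, x.2.1))).1,
        (finProdFinEquiv.symm (finProdFinEquiv (x.1.2, x.2.2))).1),
      ((finProdFinEquiv.symm (finProdFinEquiv (x.1.1, x.2.1))).2,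
        (finProdFinEquiv.symm (finProdFinEquiv (x.1.2, x.2.2))).2)) = x
    rw [Equiv.symm_apply_apply, Equiv.symm_apply_apply]

private lemma tiso_mm (m n p m' n' p' : ℕ) :
    TIso (tmul (MM F m n p) (MM F m' n' p')) (MM F (m * m') (n * n') (p * p')) := by
  have key : ∀ {N N' : ℕ} (x y : Fin (N * N')),
      x = y ↔ (finProdFinEquiv.symm x).1 = (finProdFinEquiv.symm y).1 ∧
        (finProdFinEquiv.symm x).2 = (finProdFinEquiv.symm y).2 := by
    intro N N' x y
    constructor
    · rintro rfl; exact ⟨rfl, rfl⟩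
    · intro hxy; exact finProdFinEquiv.symm.injective (Prod.ext hxy.1 hxy.2)
  refine tiso_of_equiv (splitEquiv m m' n n') (splitEquiv n n' p p') (splitEquiv m m' p p')
    fun a b c => ?_
  simp only [MM, tmul, splitEquiv, Equiv.coe_fn_mk]
  erw [ite_zero_mul_ite_zero, mul_one]
  refine if_congr ?_ rfl rfl
  rw [key a.1 c.1, key a.2 b.1, key b.2 c.2]
  tauto

end Aux

set_option maxHeartbeats 1600000 in
/-- If `t` is a C-tensor with support `⟨e,h,ℓ⟩` whose components are all isomorphic
to `⟨m,n,p⟩` and `t'` is a C-tensor with support `⟨e',h',ℓ'⟩` whose components are all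
isomorphic to `⟨m',n',p'⟩`, then `t ⊗ t'` is a C-tensor with support `⟨ee',hh',ℓℓ'⟩`
whose components are all isomorphic to `⟨mm',nn',pp'⟩`. -/
theorem stmt4 {F : Type*} [Field F] {E H L E' H' L' : Type*}
    [Fintype E] [Fintype H] [Fintype L] [DecidableEq E] [DecidableEq H] [DecidableEq L]
    [Fintype E'] [Fintype H'] [Fintype L'] [DecidableEq E'] [DecidableEq H'] [DecidableEq L']
    (m n p m' n' p' : ℕ)
    (ιU : E → H → Type*) (ιV : H → L → Type*) (ιW : E → L → Type*)
    (ιU' : E' → H' → Type*) (ιV' : H' → L' → Type*) (ιW' : E' → L' → Type*)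
    [∀ i j, Fintype (ιU i j)] [∀ i j, DecidableEq (ιU i j)]
    [∀ j k, Fintype (ιV j k)] [∀ j k, DecidableEq (ιV j k)]
    [∀ i k, Fintype (ιW i k)] [∀ i k, DecidableEq (ιW i k)]
    [∀ i j, Fintype (ιU' i j)] [∀ i j, DecidableEq (ιU' i j)]
    [∀ j k, Fintype (ιV' j k)] [∀ j k, DecidableEq (ιV' j k)]
    [∀ i k, Fintype (ιW' i k)] [∀ i k, DecidableEq (ιW' i k)]
    (t : Tensor F ((i : E) × (j : H) × ιU i j) ((j : H) × (k : L) × ιV j k)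
      ((i : E) × (k : L) × ιW i k))
    (t' : Tensor F ((i : E') × (j : H') × ιU' i j) ((j : H') × (k : L') × ιV' j k)
      ((i : E') × (k : L') × ιW' i k))
    (ht : IsCTensor F m n p ιU ιV ιW t) (ht' : IsCTensor F m' n' p' ιU' ιV' ιW' t') :
    IsCTensor F (m * m') (n * n') (p * p')
      (fun (i : E × E') (j : H × H') => ιU i.1 j.1 × ιU' i.2 j.2)
      (fun (j : H × H') (k : L × L') => ιV j.1 k.1 × ιV' j.2 k.2)
      (fun (i : E × E') (k : L × L') => ιW i.1 k.1 × ιW' i.2 k.2)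
      (fun x y z =>
        t ⟨x.1.1, x.2.1.1, x.2.2.1⟩ ⟨y.1.1, y.2.1.1, y.2.2.1⟩ ⟨z.1.1, z.2.1.1, z.2.2.1⟩ *
        t' ⟨x.1.2, x.2.1.2, x.2.2.2⟩ ⟨y.1.2, y.2.1.2, y.2.2.2⟩ ⟨z.1.2, z.2.1.2, z.2.2.2⟩) := by
  constructor
  · intro x y z hne
    by_cases h1 : x.1.1 = z.1.1 ∧ x.2.1.1 = y.1.1 ∧ y.2.1.1 = z.2.1.1
    · have h2 : ¬(x.1.2 = z.1.2 ∧ x.2.1.2 = y.1.2 ∧ y.2.1.2 = z.2.1.2) := by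
        intro h2
        exact hne ⟨Prod.ext h1.1 h2.1, Prod.ext h1.2.1 h2.2.1, Prod.ext h1.2.2 h2.2.2⟩
      exact mul_eq_zero_of_right _ (ht'.1 ⟨x.1.2, x.2.1.2, x.2.2.2⟩
        ⟨y.1.2, y.2.1.2, y.2.2.2⟩ ⟨z.1.2, z.2.1.2, z.2.2.2⟩ h2)
    · exact mul_eq_zero_of_left (ht.1 ⟨x.1.1, x.2.1.1, x.2.2.1⟩
        ⟨y.1.1, y.2.1.1, y.2.2.1⟩ ⟨z.1.1, z.2.1.1, z.2.2.1⟩ h1) _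
  · intro i j k
    have h1 := tiso_tmul (ht.2 i.1 j.1 k.1) (ht'.2 i.2 j.2 k.2)
    have h2 := tiso_mm (F := F) m n p m' n' p'
    exact tiso_trans h1 h2
end

section
/- For the Coppersmith-Winograd tensor T_CW over F^{q+2} ⊗ F^{q+2} ⊗ F^{q+2}, the border rank satisfies R̲(T_CW) ≤ q + 2. -/
/-- The Coppersmith–Winograd tensor over `F^{q+2} ⊗ F^{q+2} ⊗ F^{q+2}`:
`T_CW = ∑_{i=1}^q (x_0⊗y_i⊗z_i + x_i⊗y_0⊗z_i + x_i⊗y_i⊗z_0)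
        + x_0⊗y_0⊗z_{q+1} + x_0⊗y_{q+1}⊗z_0 + x_{q+1}⊗y_0⊗z_0`. -/
def TCW (F : Type*) [Field F] (q : ℕ) : Tensor F (Fin (q + 2)) (Fin (q + 2)) (Fin (q + 2)) :=
  fun i j k =>
    (if (i : ℕ) = 0 ∧ (j : ℕ) = (k : ℕ) ∧ 1 ≤ (j : ℕ) ∧ (j : ℕ) ≤ q then 1 else 0) +
    (if (j : ℕ) = 0 ∧ (i : ℕ) = (k : ℕ) ∧ 1 ≤ (i : ℕ) ∧ (i : ℕ) ≤ q then 1 else 0) +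
    (if (k : ℕ) = 0 ∧ (i : ℕ) = (j : ℕ) ∧ 1 ≤ (i : ℕ) ∧ (i : ℕ) ≤ q then 1 else 0) +
    (if (i : ℕ) = 0 ∧ (j : ℕ) = 0 ∧ (k : ℕ) = q + 1 then 1 else 0) +
    (if (i : ℕ) = 0 ∧ (j : ℕ) = q + 1 ∧ (k : ℕ) = 0 then 1 else 0) +
    (if (i : ℕ) = q + 1 ∧ (j : ℕ) = 0 ∧ (k : ℕ) = 0 then 1 else 0)

open Polynomial Finset

section CWaux
variable {F : Type*} [Field F]

lemma cwIndMul (p r : Prop) [Decidable p] [Decidable r] :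
    (if p then (1:F) else 0) * (if r then 1 else 0) = if p ∧ r then 1 else 0 := by
  split_ifs <;> simp_all

lemma indSum1 (q t : ℕ) : ∑ n ∈ range q, (if t = n + 1 then (1:F) else 0)
    = if 1 ≤ t ∧ t ≤ q then 1 else 0 := by
  induction q with
  | zero => rw [if_neg (by omega)]; simp
  | succ q ih =>
    rw [sum_range_succ, ih]
    split_ifs <;> (first | (exfalso; omega) | norm_num)

lemma indSum2 (q s t : ℕ) :
    ∑ n ∈ range q, (if s = n + 1 then (1:F) else 0) * (if t = n + 1 then 1 else 0)
    = if s = t ∧ 1 ≤ s ∧ s ≤ q then 1 else 0 := by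
  induction q with
  | zero => rw [if_neg (by omega)]; simp
  | succ q ih =>
    rw [sum_range_succ, ih]
    split_ifs <;> (first | (exfalso; omega) | norm_num)

lemma indSum2' (q s t : ℕ) :
    ∑ n ∈ range q, (if s = n + 1 then (if t = n + 1 then (1:F) else 0) else 0)
    = if s = t ∧ 1 ≤ s ∧ s ≤ q then 1 else 0 := by
  induction q with
  | zero => rw [if_neg (by omega)]; simp
  | succ q ih =>
    rw [sum_range_succ, ih]
    split_ifs <;> (first | (exfalso; omega) | norm_num)

variable (F) in
/-- Base vectors for the CW border decomposition. -/
noncomputable def cwBase (q : ℕ) (l : ℕ) (i : Fin (q + 2)) : Polynomial F :=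
  if l = 0 then
    C (if 1 ≤ (i:ℕ) ∧ (i:ℕ) ≤ q then (1:F) else 0) * X ^ 2 + C (if (i:ℕ) = 0 then 1 else 0)
  else if l = q + 1 then
    C (if (i:ℕ) = q + 1 then (1:F) else 0) * X ^ 3 + C (if (i:ℕ) = 0 then 1 else 0)
  else
    C (if (i:ℕ) = l then (1:F) else 0) * X ^ 1 + C (if (i:ℕ) = 0 then 1 else 0)

variable (F) in
noncomputable def cwScal (q : ℕ) (l : ℕ) : Polynomial F :=
  if l = 0 then -1 else if l = q + 1 then 1 - C (q : F) * X else X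

variable (F) in
noncomputable def cwU (q : ℕ) (l : Fin (q + 2)) (i : Fin (q + 2)) : Polynomial F :=
  cwScal F q l * cwBase F q l i

variable (F) in
noncomputable def cwV (q : ℕ) (l : Fin (q + 2)) (i : Fin (q + 2)) : Polynomial F :=
  cwBase F q l i

lemma cwT0 (q : ℕ) (i j k : Fin (q + 2)) :
    cwScal F q 0 * cwBase F q 0 i * cwBase F q 0 j * cwBase F q 0 k =
    -(C ((if 1 ≤ (i:ℕ) ∧ (i:ℕ) ≤ q then (1:F) else 0) * (if 1 ≤ (j:ℕ) ∧ (j:ℕ) ≤ q then 1 else 0) * (if 1 ≤ (k:ℕ) ∧ (k:ℕ) ≤ q then 1 else 0)) * X ^ 6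
      + C ((if 1 ≤ (i:ℕ) ∧ (i:ℕ) ≤ q then (1:F) else 0) * (if 1 ≤ (j:ℕ) ∧ (j:ℕ) ≤ q then 1 else 0) * (if (k:ℕ) = 0 then 1 else 0)
          + (if 1 ≤ (i:ℕ) ∧ (i:ℕ) ≤ q then (1:F) else 0) * (if 1 ≤ (k:ℕ) ∧ (k:ℕ) ≤ q then 1 else 0) * (if (j:ℕ) = 0 then 1 else 0)
          + (if 1 ≤ (j:ℕ) ∧ (j:ℕ) ≤ q then (1:F) else 0) * (if 1 ≤ (k:ℕ) ∧ (k:ℕ) ≤ q then 1 else 0) * (if (i:ℕ) = 0 then 1 else 0)) * X ^ 4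
      + C ((if 1 ≤ (i:ℕ) ∧ (i:ℕ) ≤ q then (1:F) else 0) * ((if (j:ℕ) = 0 then (1:F) else 0) * (if (k:ℕ) = 0 then 1 else 0))
          + (if 1 ≤ (j:ℕ) ∧ (j:ℕ) ≤ q then (1:F) else 0) * ((if (i:ℕ) = 0 then (1:F) else 0) * (if (k:ℕ) = 0 then 1 else 0))
          + (if 1 ≤ (k:ℕ) ∧ (k:ℕ) ≤ q then (1:F) else 0) * ((if (i:ℕ) = 0 then (1:F) else 0) * (if (j:ℕ) = 0 then 1 else 0))) * X ^ 2
      + C ((if (i:ℕ) = 0 then (1:F) else 0) * (if (j:ℕ) = 0 then 1 else 0) * (if (k:ℕ) = 0 then 1 else 0))) := by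
  simp only [cwScal, cwBase, if_pos rfl, eq_self_iff_true, if_true]
  simp only [map_mul, map_add]
  ring

lemma cwTlast (q : ℕ) (i j k : Fin (q + 2)) :
    cwScal F q (q + 1) * cwBase F q (q + 1) i * cwBase F q (q + 1) j * cwBase F q (q + 1) k =
    C ((if (i:ℕ) = q + 1 then (1:F) else 0) * (if (j:ℕ) = q + 1 then 1 else 0) * (if (k:ℕ) = q + 1 then 1 else 0)) * X ^ 9
    - C ((q:F) * ((if (i:ℕ) = q + 1 then (1:F) else 0) * (if (j:ℕ) = q + 1 then 1 else 0) * (if (k:ℕ) = q + 1 then 1 else 0))) * X ^ 10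
    + C ((if (i:ℕ) = q + 1 then (1:F) else 0) * (if (j:ℕ) = q + 1 then 1 else 0) * (if (k:ℕ) = 0 then 1 else 0)
        + (if (i:ℕ) = q + 1 then (1:F) else 0) * (if (k:ℕ) = q + 1 then 1 else 0) * (if (j:ℕ) = 0 then 1 else 0)
        + (if (j:ℕ) = q + 1 then (1:F) else 0) * (if (k:ℕ) = q + 1 then 1 else 0) * (if (i:ℕ) = 0 then 1 else 0)) * X ^ 6
    - C ((q:F) * ((if (i:ℕ) = q + 1 then (1:F) else 0) * (if (j:ℕ) = q + 1 then 1 else 0) * (if (k:ℕ) = 0 then 1 else 0)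
        + (if (i:ℕ) = q + 1 then (1:F) else 0) * (if (k:ℕ) = q + 1 then 1 else 0) * (if (j:ℕ) = 0 then 1 else 0)
        + (if (j:ℕ) = q + 1 then (1:F) else 0) * (if (k:ℕ) = q + 1 then 1 else 0) * (if (i:ℕ) = 0 then 1 else 0))) * X ^ 7
    + C ((if (i:ℕ) = q + 1 then (1:F) else 0) * (if (j:ℕ) = 0 then 1 else 0) * (if (k:ℕ) = 0 then 1 else 0)
        + (if (i:ℕ) = 0 then (1:F) else 0) * (if (j:ℕ) = q + 1 then 1 else 0) * (if (k:ℕ) = 0 then 1 else 0)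
        + (if (i:ℕ) = 0 then (1:F) else 0) * (if (j:ℕ) = 0 then 1 else 0) * (if (k:ℕ) = q + 1 then 1 else 0)) * X ^ 3
    - C ((q:F) * ((if (i:ℕ) = q + 1 then (1:F) else 0) * (if (j:ℕ) = 0 then 1 else 0) * (if (k:ℕ) = 0 then 1 else 0)
        + (if (i:ℕ) = 0 then (1:F) else 0) * (if (j:ℕ) = q + 1 then 1 else 0) * (if (k:ℕ) = 0 then 1 else 0)
        + (if (i:ℕ) = 0 then (1:F) else 0) * (if (j:ℕ) = 0 then 1 else 0) * (if (k:ℕ) = q + 1 then 1 else 0))) * X ^ 4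
    + C ((if (i:ℕ) = 0 then (1:F) else 0) * (if (j:ℕ) = 0 then 1 else 0) * (if (k:ℕ) = 0 then 1 else 0))
    - C ((q:F) * ((if (i:ℕ) = 0 then (1:F) else 0) * (if (j:ℕ) = 0 then 1 else 0) * (if (k:ℕ) = 0 then 1 else 0))) * X ^ 1 := by
  simp only [cwScal, cwBase, if_neg (Nat.succ_ne_zero q), if_pos rfl, eq_self_iff_true, if_true]
  simp only [map_mul, map_add]
  ring

lemma cwTmid (q : ℕ) (i j k : Fin (q + 2)) (n : ℕ) (hn : n < q) :
    cwScal F q (n + 1) * cwBase F q (n + 1) i * cwBase F q (n + 1) j * cwBase F q (n + 1) k =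
    C ((if (i:ℕ) = n + 1 then (1:F) else 0) * (if (j:ℕ) = n + 1 then 1 else 0) * (if (k:ℕ) = n + 1 then 1 else 0)) * X ^ 4
    + C ((if (i:ℕ) = n + 1 then (1:F) else 0) * (if (j:ℕ) = n + 1 then 1 else 0) * (if (k:ℕ) = 0 then 1 else 0)
        + (if (i:ℕ) = n + 1 then (1:F) else 0) * (if (k:ℕ) = n + 1 then 1 else 0) * (if (j:ℕ) = 0 then 1 else 0)
        + (if (j:ℕ) = n + 1 then (1:F) else 0) * (if (k:ℕ) = n + 1 then 1 else 0) * (if (i:ℕ) = 0 then 1 else 0)) * X ^ 3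
    + C ((if (i:ℕ) = n + 1 then (1:F) else 0) * ((if (j:ℕ) = 0 then (1:F) else 0) * (if (k:ℕ) = 0 then 1 else 0))
        + (if (j:ℕ) = n + 1 then (1:F) else 0) * ((if (i:ℕ) = 0 then (1:F) else 0) * (if (k:ℕ) = 0 then 1 else 0))
        + (if (k:ℕ) = n + 1 then (1:F) else 0) * ((if (i:ℕ) = 0 then (1:F) else 0) * (if (j:ℕ) = 0 then 1 else 0))) * X ^ 2
    + C ((if (i:ℕ) = 0 then (1:F) else 0) * (if (j:ℕ) = 0 then 1 else 0) * (if (k:ℕ) = 0 then 1 else 0)) * X ^ 1 := by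
  simp only [cwScal, cwBase, if_neg (Nat.succ_ne_zero n), if_neg (show ¬ n + 1 = q + 1 by omega)]
  simp only [map_mul, map_add]
  ring



lemma cwCoeff (q : ℕ) (i j k : Fin (q + 2)) (m : ℕ) (hm : m ≤ 3) :
    (∑ l : Fin (q + 2), cwU F q l i * cwV F q l j * cwV F q l k).coeff m
      = if m = 3 then TCW F q i j k else 0 := by
  have hrw : (∑ l : Fin (q + 2), cwU F q l i * cwV F q l j * cwV F q l k)
      = ∑ n ∈ range (q + 2), cwScal F q n * cwBase F q n i * cwBase F q n j * cwBase F q n k :=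
    Fin.sum_univ_eq_sum_range
      (fun n => cwScal F q n * cwBase F q n i * cwBase F q n j * cwBase F q n k) (q + 2)
  rw [hrw, sum_range_succ, sum_range_succ']
  rw [sum_congr rfl fun n hn => cwTmid q i j k n (mem_range.mp hn), cwT0 q i j k, cwTlast q i j k]
  interval_cases m <;>
    simp only [coeff_add, coeff_sub, Polynomial.finset_sum_coeff, coeff_neg, coeff_C_mul,
      coeff_X_pow, coeff_C] <;> norm_num
  · -- m = 2
    have hI := i.isLt
    have hJ := j.isLt
    have hK := k.isLt
    simp only [← Fin.val_eq_zero_iff]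
    by_cases hk : (k:ℕ) = 0 <;> by_cases hj : (j:ℕ) = 0 <;> by_cases hi : (i:ℕ) = 0 <;>
      simp [hi, hj, hk, indSum1, -Finset.sum_boole]
  · -- m = 3
    have hI := i.isLt
    have hJ := j.isLt
    have hK := k.isLt
    simp only [← Fin.val_eq_zero_iff]
    by_cases hi : (i:ℕ) = 0 <;> by_cases hj : (j:ℕ) = 0 <;> by_cases hk : (k:ℕ) = 0 <;>
      simp [TCW, indSum2', hi, hj, hk] <;>
      split_ifs <;> (first | (exfalso; omega) | norm_num)

end CWaux

/-- The border rank of the Coppersmith–Winograd tensor satisfies `R̲(T_CW) ≤ q + 2`. -/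
theorem stmt5 {F : Type*} [Field F] (q : ℕ) : borderRank (TCW F q) ≤ q + 2 := by
  have hmem : BorderDecomp (TCW F q) (q + 2) := by
    refine ⟨3, cwU F q, cwV F q, cwV F q, fun i j k => ⟨fun m hm => ?_, ?_⟩⟩
    · rw [cwCoeff q i j k m (by omega), if_neg (by omega)]
    · rw [cwCoeff q i j k 3 le_rfl, if_pos rfl]
  exact Nat.sInf_le hmem
end

section
/- Schönhage's asymptotic sum inequality (rectangular version): if a tensor t can be converted by zeroing out variables into a direct sum of r pairwise variable-disjoint terms, each isomorphic to ⟨m,m,m^s⟩ for some real s ≥ κ, then r · m^{ω(κ)} ≤ R̲(t). -/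
/-- The exponent of rectangular matrix multiplication:
`ω(κ) = inf { τ : R̲(⟨n,n,⌈n^κ⌉⟩) = O(n^τ) }`. -/
noncomputable def omegaExp (F : Type*) [Field F] (κ : ℝ) : ℝ :=
  sInf {τ : ℝ | ∃ C : ℝ, ∀ n : ℕ, 1 ≤ n →
    (borderRank (MM F n n (Nat.ceil ((n : ℝ) ^ κ))) : ℝ) ≤ C * (n : ℝ) ^ τ}


open Polynomial Finset

section AuxApprox

variable {F : Type*} [Field F]

/-- `f = c·X^h + O(X^{h+1})`. -/
def Approx (f : F[X]) (h : ℕ) (c : F) : Prop :=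
  ∃ g : F[X], f = C c * X ^ h + X ^ (h + 1) * g

lemma Approx.mul {f f' : F[X]} {h h' : ℕ} {c c' : F}
    (hf : Approx f h c) (hf' : Approx f' h' c') :
    Approx (f * f') (h + h') (c * c') := by
  obtain ⟨g, rfl⟩ := hf; obtain ⟨g', rfl⟩ := hf'
  refine ⟨C c * g' + C c' * g + X * g * g', ?_⟩
  rw [C_mul]
  ring

lemma Approx.zero (h : ℕ) : Approx (0 : F[X]) h 0 := ⟨0, by simp⟩

lemma Approx.add {f f' : F[X]} {h : ℕ} {c c' : F}
    (hf : Approx f h c) (hf' : Approx f' h c') : Approx (f + f') h (c + c') := by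
  obtain ⟨g, rfl⟩ := hf; obtain ⟨g', rfl⟩ := hf'
  exact ⟨g + g', by rw [C_add]; ring⟩

lemma Approx.sum {ι : Type*} (s : Finset ι) (f : ι → F[X]) (c : ι → F) (h : ℕ)
    (hf : ∀ i ∈ s, Approx (f i) h (c i)) :
    Approx (∑ i ∈ s, f i) h (∑ i ∈ s, c i) := by
  classical
  induction s using Finset.induction with
  | empty => simpa using Approx.zero h
  | insert _ _ hx ih =>
      rw [Finset.sum_insert hx, Finset.sum_insert hx]
      exact (hf _ (Finset.mem_insert_self _ _)).add
        (ih fun i hi => hf i (Finset.mem_insert_of_mem hi))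

lemma approx_iff {f : F[X]} {h : ℕ} {c : F} :
    Approx f h c ↔ (∀ m < h, f.coeff m = 0) ∧ f.coeff h = c := by
  constructor
  · rintro ⟨g, rfl⟩
    have hdvd : ∀ d < h + 1, (X ^ (h + 1) * g).coeff d = 0 := by
      intro d hd
      exact Polynomial.X_pow_dvd_iff.mp (Dvd.intro g rfl) d hd
    constructor
    · intro m hm
      rw [coeff_add, hdvd m (by omega), coeff_C_mul, coeff_X_pow, if_neg (by omega)]
      ring
    · rw [coeff_add, hdvd h (by omega), coeff_C_mul, coeff_X_pow, if_pos rfl]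
      ring
  · rintro ⟨h1, h2⟩
    have : X ^ (h + 1) ∣ f - C c * X ^ h := by
      rw [Polynomial.X_pow_dvd_iff]
      intro d hd
      rcases lt_or_eq_of_le (Nat.lt_succ_iff.mp hd) with hlt | rfl
      · rw [coeff_sub, h1 d hlt, coeff_C_mul, coeff_X_pow, if_neg (by omega)]; ring
      · rw [coeff_sub, h2, coeff_C_mul, coeff_X_pow, if_pos rfl]; ring
    obtain ⟨g, hg⟩ := this
    exact ⟨g, by linear_combination hg⟩

lemma Approx.comp_pow {f : F[X]} {h : ℕ} {c : F} (hf : Approx f h c) (M : ℕ) :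
    ∃ g' : F[X], f.comp (X ^ M) = C c * X ^ (M * h) + X ^ (M * h + M) * g' := by
  obtain ⟨g, rfl⟩ := hf
  refine ⟨g.comp (X ^ M), ?_⟩
  rw [add_comp, mul_comp, mul_comp, C_comp, pow_comp, pow_comp, X_comp,
    ← pow_mul, ← pow_mul]
  ring

end AuxApprox

section Degen

variable {F : Type*} [Field F] {ι₁ ι₂ ι₃ κ₁ κ₂ κ₃ : Type*}
  [Fintype ι₁] [Fintype ι₂] [Fintype ι₃]

lemma triple_expand {R : ℕ} (A : ι₁ → F[X]) (B : ι₂ → F[X]) (Cm : ι₃ → F[X])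
    (p : Fin R → ι₁ → F[X]) (q : Fin R → ι₂ → F[X]) (s : Fin R → ι₃ → F[X]) :
    ∑ l, (∑ i, A i * p l i) * (∑ j, B j * q l j) * (∑ k, Cm k * s l k)
      = ∑ i, ∑ j, ∑ k, A i * B j * Cm k * ∑ l, p l i * q l j * s l k := by
  have h1 : ∀ l : Fin R,
      (∑ i, A i * p l i) * (∑ j, B j * q l j) * (∑ k, Cm k * s l k)
        = ∑ i, ∑ j, ∑ k, (A i * p l i) * (B j * q l j) * (Cm k * s l k) := by
    intro l
    rw [Finset.sum_mul_sum, Finset.sum_mul]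
    refine Finset.sum_congr rfl fun i _ => ?_
    rw [Finset.sum_mul]
    exact Finset.sum_congr rfl fun j _ => Finset.mul_sum _ _ _
  simp only [h1]
  rw [Finset.sum_comm]
  refine Finset.sum_congr rfl fun i _ => ?_
  rw [Finset.sum_comm]
  refine Finset.sum_congr rfl fun j _ => ?_
  rw [Finset.sum_comm]
  refine Finset.sum_congr rfl fun k _ => ?_
  rw [Finset.mul_sum]
  exact Finset.sum_congr rfl fun l _ => by ring

lemma borderDecomp_iff {t : Tensor F ι₁ ι₂ ι₃} {r : ℕ} :
    BorderDecomp t r ↔ ∃ (h : ℕ) (u : Fin r → ι₁ → F[X]) (v : Fin r → ι₂ → F[X])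
      (w : Fin r → ι₃ → F[X]), ∀ i j k,
        Approx (∑ l, u l i * v l j * w l k) h (t i j k) := by
  unfold BorderDecomp
  refine exists_congr fun h => exists_congr fun u => exists_congr fun v =>
    exists_congr fun w => forall_congr' fun i => forall_congr' fun j =>
    forall_congr' fun k => ?_
  rw [approx_iff]

/-- `t'` is a (border) degeneration of `t`. -/
def Degen (t : Tensor F ι₁ ι₂ ι₃) (t' : Tensor F κ₁ κ₂ κ₃) : Prop :=
  ∃ (g : ℕ) (A : κ₁ → ι₁ → F[X]) (B : κ₂ → ι₂ → F[X]) (Cm : κ₃ → ι₃ → F[X]),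
    ∀ a b c, Approx (∑ i, ∑ j, ∑ k, A a i * B b j * Cm c k * C (t i j k))
      g (t' a b c)

lemma BorderDecomp.of_degen [Fintype κ₁] [Fintype κ₂] [Fintype κ₃]
    {t : Tensor F ι₁ ι₂ ι₃} {t' : Tensor F κ₁ κ₂ κ₃} {R : ℕ}
    (hb : BorderDecomp t R) (hd : Degen t t') : BorderDecomp t' R := by
  rw [borderDecomp_iff] at hb ⊢
  obtain ⟨h, u, v, w, hu⟩ := hb
  obtain ⟨g, A, B, Cm, hA⟩ := hd
  have hu' : ∀ i j k, Approx (∑ l, u l i * v l j * w l k) h (t i j k) := hu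
  choose gt hgt using fun i j k => Approx.comp_pow (hu' i j k) (g + 1)
  refine ⟨(g + 1) * h + g,
    fun l a => ∑ i, A a i * (u l i).comp (X ^ (g + 1)),
    fun l b => ∑ j, B b j * (v l j).comp (X ^ (g + 1)),
    fun l c => ∑ k, Cm c k * (w l k).comp (X ^ (g + 1)), ?_⟩
  intro a b c
  rw [triple_expand]
  have hcomp : ∀ i j k, ∑ l, (u l i).comp (X ^ (g + 1)) * (v l j).comp (X ^ (g + 1))
      * (w l k).comp (X ^ (g + 1)) = (∑ l, u l i * v l j * w l k).comp (X ^ (g + 1)) := by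
    intro i j k
    symm
    rw [Polynomial.comp, Polynomial.eval₂_finset_sum]
    exact Finset.sum_congr rfl fun l _ => by rw [← Polynomial.comp, mul_comp, mul_comp]
  obtain ⟨G, hG⟩ := hA a b c
  refine ⟨G + ∑ i, ∑ j, ∑ k, A a i * B b j * Cm c k * gt i j k, ?_⟩
  have hterm : ∀ (i : ι₁) (j : ι₂) (k : ι₃),
      A a i * B b j * Cm c k * ∑ l, (u l i).comp (X ^ (g + 1)) * (v l j).comp (X ^ (g + 1))
        * (w l k).comp (X ^ (g + 1))
      = X ^ ((g + 1) * h) * (A a i * B b j * Cm c k * C (t i j k))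
        + X ^ ((g + 1) * h + (g + 1)) * (A a i * B b j * Cm c k * gt i j k) := by
    intro i j k
    rw [hcomp, hgt]
    ring
  simp only [hterm]
  simp only [Finset.sum_add_distrib, ← Finset.mul_sum]
  rw [hG]
  ring

end Degen

section Basics

variable {F : Type*} [Field F] {ι₁ ι₂ ι₃ κ₁ κ₂ κ₃ : Type*}
  [Fintype ι₁] [Fintype ι₂] [Fintype ι₃]

lemma BorderDecomp.mono {t : Tensor F ι₁ ι₂ ι₃} {s s' : ℕ}
    (hb : BorderDecomp t s) (hs : s ≤ s') : BorderDecomp t s' := by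
  rw [borderDecomp_iff] at hb ⊢
  obtain ⟨h, u, v, w, hu⟩ := hb
  refine ⟨h, fun l i => if hl : (l : ℕ) < s then u ⟨l, hl⟩ i else 0,
    fun l j => if hl : (l : ℕ) < s then v ⟨l, hl⟩ j else 0,
    fun l k => if hl : (l : ℕ) < s then w ⟨l, hl⟩ k else 0, ?_⟩
  intro i j k
  have key : (∑ l : Fin s', (if hl : (l : ℕ) < s then u ⟨l, hl⟩ i else 0)
      * (if hl : (l : ℕ) < s then v ⟨l, hl⟩ j else 0)
      * (if hl : (l : ℕ) < s then w ⟨l, hl⟩ k else 0))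
      = ∑ l : Fin s, u l i * v l j * w l k := by
    have e1 : ∀ n : ℕ, (if hl : n < s then u ⟨n, hl⟩ i else 0)
        * (if hl : n < s then v ⟨n, hl⟩ j else 0)
        * (if hl : n < s then w ⟨n, hl⟩ k else 0)
        = if hl : n < s then u ⟨n, hl⟩ i * v ⟨n, hl⟩ j * w ⟨n, hl⟩ k else 0 := by
      intro n; split_ifs <;> simp
    simp only [e1]
    rw [Fin.sum_univ_eq_sum_range
      (fun n => if hl : n < s then u ⟨n, hl⟩ i * v ⟨n, hl⟩ j * w ⟨n, hl⟩ k else 0) s']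
    rw [← Finset.sum_subset (Finset.range_subset_range.mpr hs)
      (fun x _ hx => by rw [dif_neg (by simpa using hx)])]
    rw [← Fin.sum_univ_eq_sum_range
      (fun n => if hl : n < s then u ⟨n, hl⟩ i * v ⟨n, hl⟩ j * w ⟨n, hl⟩ k else 0) s]
    exact Finset.sum_congr rfl fun l _ => by rw [dif_pos l.isLt]
  rw [key]
  exact hu i j k

lemma borderDecomp_trivial (t : Tensor F ι₁ ι₂ ι₃) :
    BorderDecomp t (Fintype.card (ι₁ × ι₂ × ι₃)) := by
  classical
  rw [borderDecomp_iff]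
  set e := (Fintype.equivFin (ι₁ × ι₂ × ι₃)).symm with he
  refine ⟨0,
    fun l i => if (e l).1 = i then Polynomial.C (t (e l).1 (e l).2.1 (e l).2.2) else 0,
    fun l j => if (e l).2.1 = j then 1 else 0,
    fun l k => if (e l).2.2 = k then 1 else 0, ?_⟩
  intro i j k
  refine ⟨0, ?_⟩
  rw [Finset.sum_eq_single (e.symm (i, j, k))]
  · simp
  · intro l _ hl
    have hne : e l ≠ (i, j, k) := fun hc => hl (by rw [← hc]; simp)
    have : (e l).1 ≠ i ∨ (e l).2.1 ≠ j ∨ (e l).2.2 ≠ k := by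
      by_contra hcon
      push_neg at hcon
      exact hne (by ext <;> simp [hcon.1, hcon.2.1, hcon.2.2])
    rcases this with h' | h' | h' <;> simp [if_neg h']
  · intro h'; exact absurd (Finset.mem_univ _) h'

lemma borderDecomp_borderRank (t : Tensor F ι₁ ι₂ ι₃) :
    BorderDecomp t (borderRank t) :=
  Nat.sInf_mem (s := {r | BorderDecomp t r}) ⟨_, borderDecomp_trivial t⟩

lemma borderRank_le_of_decomp {t : Tensor F ι₁ ι₂ ι₃} {s : ℕ}
    (hb : BorderDecomp t s) : borderRank t ≤ s :=
  Nat.sInf_le hb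

lemma borderDecomp_of_le {t : Tensor F ι₁ ι₂ ι₃} {s : ℕ}
    (hs : borderRank t ≤ s) : BorderDecomp t s :=
  (borderDecomp_borderRank t).mono hs

lemma borderRank_le_of_degen [Fintype κ₁] [Fintype κ₂] [Fintype κ₃]
    {t : Tensor F ι₁ ι₂ ι₃} {t' : Tensor F κ₁ κ₂ κ₃}
    (hd : Degen t t') : borderRank t' ≤ borderRank t :=
  borderRank_le_of_decomp ((borderDecomp_borderRank t).of_degen hd)

lemma degen_of_scalar {t : Tensor F ι₁ ι₂ ι₃} {t' : Tensor F κ₁ κ₂ κ₃}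
    (A : κ₁ → ι₁ → F) (B : κ₂ → ι₂ → F) (Cm : κ₃ → ι₃ → F)
    (hH : ∀ a b c, t' a b c = ∑ i, ∑ j, ∑ k, A a i * B b j * Cm c k * t i j k) :
    Degen t t' := by
  refine ⟨0, fun a i => Polynomial.C (A a i), fun b j => Polynomial.C (B b j),
    fun c k => Polynomial.C (Cm c k), ?_⟩
  intro a b c
  refine ⟨0, ?_⟩
  have e1 : ∀ (i : ι₁) (j : ι₂) (k : ι₃),
      Polynomial.C (A a i) * Polynomial.C (B b j) * Polynomial.C (Cm c k)
        * Polynomial.C (t i j k)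
      = Polynomial.C (A a i * B b j * Cm c k * t i j k) := by
    intros; simp [Polynomial.C_mul]
  simp only [e1, ← map_sum]
  rw [← hH]
  ring

lemma degen_reindex {t : Tensor F ι₁ ι₂ ι₃} {t' : Tensor F κ₁ κ₂ κ₃}
    [DecidableEq ι₁] [DecidableEq ι₂] [DecidableEq ι₃]
    (e₁ : κ₁ → ι₁) (e₂ : κ₂ → ι₂) (e₃ : κ₃ → ι₃)
    (hv : ∀ a b c, t' a b c = t (e₁ a) (e₂ b) (e₃ c)) : Degen t t' := by
  refine degen_of_scalar (fun a i => if i = e₁ a then 1 else 0)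
    (fun b j => if j = e₂ b then 1 else 0) (fun c k => if k = e₃ c then 1 else 0) ?_
  intro a b c
  have e0 : ∀ (i : ι₁) (j : ι₂) (k : ι₃),
      (if i = e₁ a then (1 : F) else 0) * (if j = e₂ b then 1 else 0)
        * (if k = e₃ c then 1 else 0) * t i j k
      = if k = e₃ c then (if j = e₂ b then (if i = e₁ a then t i j k else 0) else 0)
        else 0 := by
    intros; split_ifs <;> simp
  simp only [e0, Finset.sum_ite_eq', Finset.mem_univ, if_true]
  exact hv a b c

lemma sum_mul_sum₃ {α β γ α' β' γ' : Type*} [Fintype α] [Fintype β] [Fintype γ]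
    [Fintype α'] [Fintype β'] [Fintype γ']
    (f : α → β → γ → F[X]) (g : α' → β' → γ' → F[X]) :
    (∑ a, ∑ b, ∑ c, f a b c) * (∑ a', ∑ b', ∑ c', g a' b' c')
      = ∑ a, ∑ a', ∑ b, ∑ b', ∑ c, ∑ c', f a b c * g a' b' c' := by
  rw [Finset.sum_mul_sum]
  refine Finset.sum_congr rfl fun a _ => Finset.sum_congr rfl fun a' _ => ?_
  rw [Finset.sum_mul_sum]
  refine Finset.sum_congr rfl fun b _ => Finset.sum_congr rfl fun b' _ => ?_
  exact Finset.sum_mul_sum _ _ _ _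

lemma Degen.tmul {κ₁' κ₂' κ₃' μ₁ μ₂ μ₃ : Type*}
    [Fintype κ₁] [Fintype κ₂] [Fintype κ₃]
    {t : Tensor F ι₁ ι₂ ι₃} {t' : Tensor F μ₁ μ₂ μ₃}
    {s : Tensor F κ₁ κ₂ κ₃} {s' : Tensor F κ₁' κ₂' κ₃'}
    (h1 : Degen t t') (h2 : Degen s s') : Degen (_root_.tmul t s) (_root_.tmul t' s') := by
  obtain ⟨g, A, B, Cm, hA⟩ := h1
  obtain ⟨g', A', B', C', hA'⟩ := h2
  refine ⟨g + g', fun a i => A a.1 i.1 * A' a.2 i.2, fun b j => B b.1 j.1 * B' b.2 j.2,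
    fun c k => Cm c.1 k.1 * C' c.2 k.2, ?_⟩
  intro a b c
  have happ := (hA a.1 b.1 c.1).mul (hA' a.2 b.2 c.2)
  have e0 : (∑ i, ∑ j, ∑ k, A a.1 i * B b.1 j * Cm c.1 k * Polynomial.C (t i j k))
      * (∑ i, ∑ j, ∑ k, A' a.2 i * B' b.2 j * C' c.2 k * Polynomial.C (s i j k))
      = ∑ i : ι₁ × κ₁, ∑ j : ι₂ × κ₂, ∑ k : ι₃ × κ₃,
          (A a.1 i.1 * A' a.2 i.2) * (B b.1 j.1 * B' b.2 j.2)
            * (Cm c.1 k.1 * C' c.2 k.2) * Polynomial.C (_root_.tmul t s i j k) := by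
    rw [sum_mul_sum₃]
    simp only [Fintype.sum_prod_type]
    refine Finset.sum_congr rfl fun i1 _ => Finset.sum_congr rfl fun i2 _ =>
      Finset.sum_congr rfl fun j1 _ => Finset.sum_congr rfl fun j2 _ =>
      Finset.sum_congr rfl fun k1 _ => Finset.sum_congr rfl fun k2 _ => ?_
    simp only [_root_.tmul]
    rw [Polynomial.C_mul]
    ring
  rw [← e0]
  exact happ

lemma BorderDecomp.tmul [Fintype κ₁] [Fintype κ₂] [Fintype κ₃]
    {t : Tensor F ι₁ ι₂ ι₃} {s : Tensor F κ₁ κ₂ κ₃} {r r' : ℕ}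
    (h1 : BorderDecomp t r) (h2 : BorderDecomp s r') :
    BorderDecomp (tmul t s) (r * r') := by
  rw [borderDecomp_iff] at h1 h2 ⊢
  obtain ⟨h, u, v, w, hu⟩ := h1
  obtain ⟨h', u', v', w', hu'⟩ := h2
  refine ⟨h + h',
    fun l i => u (finProdFinEquiv.symm l).1 i.1 * u' (finProdFinEquiv.symm l).2 i.2,
    fun l j => v (finProdFinEquiv.symm l).1 j.1 * v' (finProdFinEquiv.symm l).2 j.2,
    fun l k => w (finProdFinEquiv.symm l).1 k.1 * w' (finProdFinEquiv.symm l).2 k.2,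
    ?_⟩
  intro i j k
  have e0 : (∑ l : Fin (r * r'),
      u (finProdFinEquiv.symm l).1 i.1 * u' (finProdFinEquiv.symm l).2 i.2
      * (v (finProdFinEquiv.symm l).1 j.1 * v' (finProdFinEquiv.symm l).2 j.2)
      * (w (finProdFinEquiv.symm l).1 k.1 * w' (finProdFinEquiv.symm l).2 k.2))
      = (∑ l : Fin r, u l i.1 * v l j.1 * w l k.1)
        * (∑ l' : Fin r', u' l' i.2 * v' l' j.2 * w' l' k.2) := by
    calc (∑ l : Fin (r * r'),
        u (finProdFinEquiv.symm l).1 i.1 * u' (finProdFinEquiv.symm l).2 i.2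
        * (v (finProdFinEquiv.symm l).1 j.1 * v' (finProdFinEquiv.symm l).2 j.2)
        * (w (finProdFinEquiv.symm l).1 k.1 * w' (finProdFinEquiv.symm l).2 k.2))
        = ∑ p : Fin r × Fin r', (u p.1 i.1 * u' p.2 i.2) * (v p.1 j.1 * v' p.2 j.2)
            * (w p.1 k.1 * w' p.2 k.2) :=
          Equiv.sum_comp (finProdFinEquiv.symm : Fin (r * r') ≃ Fin r × Fin r')
            (fun p : Fin r × Fin r' => (u p.1 i.1 * u' p.2 i.2) * (v p.1 j.1 * v' p.2 j.2)
              * (w p.1 k.1 * w' p.2 k.2))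
      _ = ∑ l : Fin r, ∑ l' : Fin r', (u l i.1 * u' l' i.2) * (v l j.1 * v' l' j.2)
            * (w l k.1 * w' l' k.2) := Fintype.sum_prod_type _
      _ = (∑ l : Fin r, u l i.1 * v l j.1 * w l k.1)
            * (∑ l' : Fin r', u' l' i.2 * v' l' j.2 * w' l' k.2) := by
          rw [Finset.sum_mul_sum]
          exact Finset.sum_congr rfl fun l _ => Finset.sum_congr rfl fun l' _ => by ring
  rw [e0]
  exact (hu i.1 j.1 k.1).mul (hu' i.2 j.2 k.2)

end Basics

section MMfacts

variable {F : Type*} [Field F] {ι₁ ι₂ ι₃ κ₁ κ₂ κ₃ : Type*}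
  [Fintype ι₁] [Fintype ι₂] [Fintype ι₃]

/-- Direct sum of `r` copies of `⟨1,1,1⟩`. -/
def diagT (F : Type*) [Field F] (r : ℕ) : Tensor F (Fin r) (Fin r) (Fin r) :=
  fun i j k => if i = j ∧ j = k then 1 else 0

lemma ite_one_zero_mul (P Q : Prop) [Decidable P] [Decidable Q] :
    (if P then (1 : F) else 0) * (if Q then 1 else 0) = if P ∧ Q then 1 else 0 := by
  split_ifs <;> simp_all

lemma eq_iff_equiv_fst_snd {α β γ : Type*} (e : α ≃ β × γ) (x x' : α) :
    x = x' ↔ (e x).1 = (e x').1 ∧ (e x).2 = (e x').2 :=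
  (EmbeddingLike.apply_eq_iff_eq e).symm.trans Prod.ext_iff

lemma degen_refl (t : Tensor F ι₁ ι₂ ι₃) [DecidableEq ι₁] [DecidableEq ι₂]
    [DecidableEq ι₃] : Degen t t :=
  degen_reindex id id id fun _ _ _ => rfl

lemma degen_diag {s : ℕ} [Fintype κ₁] [Fintype κ₂] [Fintype κ₃]
    {Y : Tensor F κ₁ κ₂ κ₃} (hb : BorderDecomp Y s) : Degen (diagT F s) Y := by
  rw [borderDecomp_iff] at hb
  obtain ⟨h, u, v, w, hu⟩ := hb
  refine ⟨h, fun y l => u l y, fun y l => v l y, fun y l => w l y, ?_⟩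
  intro a b c
  have collapse : ∑ i : Fin s, ∑ j : Fin s, ∑ k : Fin s,
      u i a * v j b * w k c * Polynomial.C (diagT F s i j k)
      = ∑ l : Fin s, u l a * v l b * w l c := by
    have e1 : ∀ i j k : Fin s, u i a * v j b * w k c * Polynomial.C (diagT F s i j k)
        = if k = j then (if j = i then u i a * v j b * w k c else 0) else 0 := by
      intro i j k
      unfold diagT
      rcases eq_or_ne k j with rfl | hkj
      · rcases eq_or_ne k i with rfl | hki
        · simp
        · simp [Ne.symm hki, hki, eq_comm]
      · have : ¬(i = j ∧ j = k) := fun hc => hkj (hc.2.symm)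
        simp [this, hkj]
    simp only [e1, Finset.sum_ite_eq', Finset.mem_univ, if_true]
  rw [collapse]
  exact hu a b c

lemma borderDecomp_MM (a b c : ℕ) : BorderDecomp (MM F a b c) (a * b * c) := by
  rw [borderDecomp_iff]
  set e : Fin (a * b * c) ≃ (Fin a × Fin b) × Fin c :=
    finProdFinEquiv.symm.trans (Equiv.prodCongr finProdFinEquiv.symm (Equiv.refl (Fin c)))
    with he
  refine ⟨0, fun l i => if i = (e l).1 then 1 else 0,
    fun l j => if j = ((e l).1.2, (e l).2) then 1 else 0,
    fun l k => if k = ((e l).1.1, (e l).2) then 1 else 0, ?_⟩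
  rintro ⟨i1, i2⟩ ⟨j1, j2⟩ ⟨k1, k2⟩
  refine ⟨0, ?_⟩
  have e1 : ∀ p : (Fin a × Fin b) × Fin c,
      (if ((i1, i2) : Fin a × Fin b) = p.1 then (1 : F[X]) else 0)
        * (if ((j1, j2) : Fin b × Fin c) = (p.1.2, p.2) then 1 else 0)
        * (if ((k1, k2) : Fin a × Fin c) = (p.1.1, p.2) then 1 else 0)
      = if p.2 = j2 then (if p.1 = (i1, i2) then
          (if i1 = k1 ∧ i2 = j1 ∧ j2 = k2 then 1 else 0) else 0) else 0 := by
    rintro ⟨⟨q1, q2⟩, z⟩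
    split_ifs <;> simp_all [Prod.mk.injEq] <;> tauto
  have key : (∑ l : Fin (a * b * c),
      (if ((i1, i2) : Fin a × Fin b) = (e l).1 then (1 : F[X]) else 0)
        * (if ((j1, j2) : Fin b × Fin c) = ((e l).1.2, (e l).2) then 1 else 0)
        * (if ((k1, k2) : Fin a × Fin c) = ((e l).1.1, (e l).2) then 1 else 0))
      = Polynomial.C (MM F a b c (i1, i2) (j1, j2) (k1, k2)) := by
    rw [show (∑ l : Fin (a * b * c),
      (if ((i1, i2) : Fin a × Fin b) = (e l).1 then (1 : F[X]) else 0)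
        * (if ((j1, j2) : Fin b × Fin c) = ((e l).1.2, (e l).2) then 1 else 0)
        * (if ((k1, k2) : Fin a × Fin c) = ((e l).1.1, (e l).2) then 1 else 0))
      = ∑ p : (Fin a × Fin b) × Fin c,
      (if ((i1, i2) : Fin a × Fin b) = p.1 then (1 : F[X]) else 0)
        * (if ((j1, j2) : Fin b × Fin c) = (p.1.2, p.2) then 1 else 0)
        * (if ((k1, k2) : Fin a × Fin c) = (p.1.1, p.2) then 1 else 0) from
      Equiv.sum_comp e (fun p : (Fin a × Fin b) × Fin c =>
        (if ((i1, i2) : Fin a × Fin b) = p.1 then (1 : F[X]) else 0)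
        * (if ((j1, j2) : Fin b × Fin c) = (p.1.2, p.2) then 1 else 0)
        * (if ((k1, k2) : Fin a × Fin c) = (p.1.1, p.2) then 1 else 0))]
    simp only [e1]
    rw [Fintype.sum_prod_type]
    simp only [Finset.sum_ite_eq', Finset.mem_univ, if_true]
    simp [MM, apply_ite Polynomial.C]
  rw [key]
  ring

end MMfacts

section Step

variable {F : Type*} [Field F]

lemma degen_mm_mul {a b c a' b' c' : ℕ} :
    Degen (tmul (MM F a b c) (MM F a' b' c')) (MM F (a * a') (b * b') (c * c')) := by
  refine degen_reindex
    (fun p : Fin (a * a') × Fin (b * b') =>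
      (((finProdFinEquiv.symm p.1).1, (finProdFinEquiv.symm p.2).1),
       ((finProdFinEquiv.symm p.1).2, (finProdFinEquiv.symm p.2).2)))
    (fun p : Fin (b * b') × Fin (c * c') =>
      (((finProdFinEquiv.symm p.1).1, (finProdFinEquiv.symm p.2).1),
       ((finProdFinEquiv.symm p.1).2, (finProdFinEquiv.symm p.2).2)))
    (fun p : Fin (a * a') × Fin (c * c') =>
      (((finProdFinEquiv.symm p.1).1, (finProdFinEquiv.symm p.2).1),
       ((finProdFinEquiv.symm p.1).2, (finProdFinEquiv.symm p.2).2)))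
    ?_
  intro A B C
  simp only [tmul, MM, ite_one_zero_mul]
  refine if_congr ?_ rfl rfl
  rw [eq_iff_equiv_fst_snd (finProdFinEquiv.symm : Fin (a * a') ≃ _) A.1 C.1,
    eq_iff_equiv_fst_snd (finProdFinEquiv.symm : Fin (b * b') ≃ _) A.2 B.1,
    eq_iff_equiv_fst_snd (finProdFinEquiv.symm : Fin (c * c') ≃ _) B.2 C.2]
  tauto

lemma degen_step {s s' a b c a' b' c' : ℕ} :
    Degen (tmul (tmul (diagT F s) (MM F a b c)) (tmul (diagT F s') (MM F a' b' c')))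
      (tmul (diagT F (s * s')) (MM F (a * a') (b * b') (c * c'))) := by
  refine degen_reindex
    (fun p : Fin (s * s') × (Fin (a * a') × Fin (b * b')) =>
      (((finProdFinEquiv.symm p.1).1,
        ((finProdFinEquiv.symm p.2.1).1, (finProdFinEquiv.symm p.2.2).1)),
       ((finProdFinEquiv.symm p.1).2,
        ((finProdFinEquiv.symm p.2.1).2, (finProdFinEquiv.symm p.2.2).2))))
    (fun p : Fin (s * s') × (Fin (b * b') × Fin (c * c')) =>
      (((finProdFinEquiv.symm p.1).1,
        ((finProdFinEquiv.symm p.2.1).1, (finProdFinEquiv.symm p.2.2).1)),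
       ((finProdFinEquiv.symm p.1).2,
        ((finProdFinEquiv.symm p.2.1).2, (finProdFinEquiv.symm p.2.2).2))))
    (fun p : Fin (s * s') × (Fin (a * a') × Fin (c * c')) =>
      (((finProdFinEquiv.symm p.1).1,
        ((finProdFinEquiv.symm p.2.1).1, (finProdFinEquiv.symm p.2.2).1)),
       ((finProdFinEquiv.symm p.1).2,
        ((finProdFinEquiv.symm p.2.1).2, (finProdFinEquiv.symm p.2.2).2))))
    ?_
  intro A B C
  simp only [tmul, diagT, MM, ite_one_zero_mul]
  refine if_congr ?_ rfl rfl
  rw [eq_iff_equiv_fst_snd (finProdFinEquiv.symm : Fin (s * s') ≃ _) A.1 B.1,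
    eq_iff_equiv_fst_snd (finProdFinEquiv.symm : Fin (s * s') ≃ _) B.1 C.1,
    eq_iff_equiv_fst_snd (finProdFinEquiv.symm : Fin (a * a') ≃ _) A.2.1 C.2.1,
    eq_iff_equiv_fst_snd (finProdFinEquiv.symm : Fin (b * b') ≃ _) A.2.2 B.2.1,
    eq_iff_equiv_fst_snd (finProdFinEquiv.symm : Fin (c * c') ≃ _) B.2.2 C.2.2]
  tauto

lemma degen_mm_mono {n n' q q' : ℕ} (hn : n ≤ n') (hq : q ≤ q') :
    Degen (MM F n' n' q') (MM F n n q) := by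
  refine degen_reindex
    (fun p : Fin n × Fin n => (Fin.castLE hn p.1, Fin.castLE hn p.2))
    (fun p : Fin n × Fin q => (Fin.castLE hn p.1, Fin.castLE hq p.2))
    (fun p : Fin n × Fin q => (Fin.castLE hn p.1, Fin.castLE hq p.2)) ?_
  intro A B C
  simp only [MM]
  refine if_congr ?_ rfl rfl
  simp only [Fin.castLE_inj]

lemma borderRank_MM_mono {n n' q q' : ℕ} (hn : n ≤ n') (hq : q ≤ q') :
    borderRank (MM F n n q) ≤ borderRank (MM F n' n' q') :=
  borderRank_le_of_degen (degen_mm_mono hn hq)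

lemma bd_base : BorderDecomp (tmul (diagT F 1) (MM F 1 1 1)) 1 := by
  rw [borderDecomp_iff]
  refine ⟨0, fun _ _ => 1, fun _ _ => 1, fun _ _ => 1, ?_⟩
  intro i j k
  refine ⟨0, ?_⟩
  have hval : tmul (diagT F 1) (MM F 1 1 1) i j k = 1 := by
    have h1 : ∀ x y : Fin 1, x = y := fun x y => Subsingleton.elim x y
    have hd : diagT F 1 i.1 j.1 k.1 = 1 := by
      unfold diagT; rw [if_pos ⟨h1 _ _, h1 _ _⟩]
    have hm : MM F 1 1 1 i.2 j.2 k.2 = 1 := by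
      unfold MM; rw [if_pos ⟨h1 _ _, h1 _ _, h1 _ _⟩]
    unfold tmul; rw [hd, hm, one_mul]
  rw [hval]
  simp

lemma bd_congr {x x' y y' z z' R : ℕ}
    (h : BorderDecomp (tmul (diagT F x) (MM F y y z)) R)
    (hx : x = x') (hy : y = y') (hz : z = z') :
    BorderDecomp (tmul (diagT F x') (MM F y' y' z')) R := by
  subst hx; subst hy; subst hz; exact h

lemma key_prop {r m P R : ℕ}
    (hD : BorderDecomp (tmul (diagT F r) (MM F m m P)) R) (N a b : ℕ)
    (hab : BorderDecomp (MM F a a b) (r ^ N)) :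
    BorderDecomp (MM F (a * m ^ N) (a * m ^ N) (b * P ^ N)) (R ^ N) := by
  have QN : ∀ n : ℕ, BorderDecomp (tmul (diagT F (r ^ n)) (MM F (m ^ n) (m ^ n) (P ^ n)))
      (R ^ n) := by
    intro n
    induction n with
    | zero =>
        rw [pow_zero]
        exact bd_congr bd_base (pow_zero r).symm (pow_zero m).symm (pow_zero P).symm
    | succ n ih =>
        have h1 := ih.tmul hD
        have h2 := h1.of_degen degen_step
        rw [pow_succ]
        exact bd_congr h2 rfl rfl rfl
  have d2 : Degen (tmul (diagT F (r ^ N)) (MM F (m ^ N) (m ^ N) (P ^ N)))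
      (tmul (MM F a a b) (MM F (m ^ N) (m ^ N) (P ^ N))) :=
    (degen_diag hab).tmul (degen_refl _)
  exact ((QN N).of_degen d2).of_degen degen_mm_mul

end Step

section LB

variable {F : Type*} [Field F] {ι₁ ι₂ ι₃ : Type*}
  [Fintype ι₁] [Fintype ι₂] [Fintype ι₃]

lemma approx_C_mul {f : F[X]} {h : ℕ} {c : F} (a : F) (hf : Approx f h c) :
    Approx (Polynomial.C a * f) h (a * c) := by
  obtain ⟨g, rfl⟩ := hf
  exact ⟨Polynomial.C a * g, by rw [Polynomial.C_mul]; ring⟩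

lemma lb_of_diag_family {J : Type*} [Fintype J] [DecidableEq J]
    {t : Tensor F ι₁ ι₂ ι₃} {R : ℕ}
    (x : J → ι₁ → F) (y : J → ι₂ → F) (z : J → ι₃ → F)
    (hxyz : ∀ α β, (∑ i, ∑ j, ∑ k, x α i * y β j * z β k * t i j k)
      = if α = β then (1 : F) else 0)
    (hbd : BorderDecomp t R) : Fintype.card J ≤ R := by
  rw [borderDecomp_iff] at hbd
  obtain ⟨h, u, v, w, hu⟩ := hbd
  by_contra hlt
  push_neg at hlt
  set Amat : Matrix J (Fin R) F[X] :=
    Matrix.of fun α l => ∑ i, Polynomial.C (x α i) * u l i with hAmat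
  set Bmat : Matrix (Fin R) J F[X] :=
    Matrix.of fun l β => (∑ j, Polynomial.C (y β j) * v l j)
      * (∑ k, Polynomial.C (z β k) * w l k) with hBmat
  set G : Matrix J J F[X] := Amat * Bmat with hG
  have hGapprox : ∀ α β, Approx (G α β) h (if α = β then (1 : F) else 0) := by
    intro α β
    have e0 : G α β = ∑ i, ∑ j, ∑ k, Polynomial.C (x α i) * Polynomial.C (y β j)
        * Polynomial.C (z β k) * ∑ l, u l i * v l j * w l k := by
      rw [hG, Matrix.mul_apply]
      rw [← triple_expand (fun i => Polynomial.C (x α i)) (fun j => Polynomial.C (y β j))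
        (fun k => Polynomial.C (z β k)) u v w]
      exact Finset.sum_congr rfl fun l _ => by rw [hAmat, hBmat]; simp [Matrix.of_apply]; ring
    rw [e0, ← hxyz α β]
    refine Approx.sum _ _ _ _ fun i _ => ?_
    refine Approx.sum _ _ _ _ fun j _ => ?_
    refine Approx.sum _ _ _ _ fun k _ => ?_
    have e1 : Polynomial.C (x α i) * Polynomial.C (y β j) * Polynomial.C (z β k)
        * ∑ l, u l i * v l j * w l k
        = Polynomial.C (x α i * y β j * z β k) * ∑ l, u l i * v l j * w l k := by
      rw [Polynomial.C_mul, Polynomial.C_mul]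
    rw [e1, show x α i * y β j * z β k * t i j k
      = (x α i * y β j * z β k) * t i j k from rfl]
    exact approx_C_mul _ (hu i j k)
  -- G = X^h • H with H ≡ 1 mod X
  choose g hg using hGapprox
  set H : Matrix J J F[X] :=
    Matrix.of fun α β => (if α = β then 1 else 0) + Polynomial.X * g α β with hH
  have hGH : G = (Polynomial.X ^ h : F[X]) • H := by
    refine Matrix.ext fun α β => ?_
    rw [Matrix.smul_apply, smul_eq_mul, hH, Matrix.of_apply, hg α β]
    rw [apply_ite Polynomial.C, Polynomial.C_1, Polynomial.C_0]
    ring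
  have hdetH : H.det ≠ 0 := by
    intro hc
    have h1 : (Polynomial.evalRingHom (0 : F)) H.det = 0 := by rw [hc]; simp
    rw [RingHom.map_det, RingHom.mapMatrix_apply] at h1
    have h2 : H.map (Polynomial.evalRingHom (0 : F)) = (1 : Matrix J J F) := by
      ext α β
      simp [Matrix.map_apply, hH, Matrix.one_apply, apply_ite]
    rw [h2, Matrix.det_one] at h1
    exact one_ne_zero h1
  have hdetG : G.det ≠ 0 := by
    rw [hGH, Matrix.det_smul]
    exact mul_ne_zero (pow_ne_zero _ (pow_ne_zero _ Polynomial.X_ne_zero)) hdetH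
  -- rank over the fraction field
  set K := FractionRing (F[X])
  have hinj : Function.Injective (algebraMap F[X] K) := IsFractionRing.injective _ _
  have hdetGk : (G.map (algebraMap F[X] K)).det ≠ 0 := by
    rw [← RingHom.mapMatrix_apply, ← RingHom.map_det]
    intro hc
    exact hdetG (hinj (by rw [hc, map_zero]))
  have hunit : IsUnit (G.map (algebraMap F[X] K)) :=
    (Matrix.isUnit_iff_isUnit_det _).mpr hdetGk.isUnit
  have hrank1 : (G.map (algebraMap F[X] K)).rank = Fintype.card J :=
    Matrix.rank_of_isUnit _ hunit
  have hrank2 : (G.map (algebraMap F[X] K)).rank ≤ R := by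
    have : G.map (algebraMap F[X] K)
        = Amat.map (algebraMap F[X] K) * Bmat.map (algebraMap F[X] K) := by
      rw [hG, Matrix.map_mul]
    rw [this]
    exact le_trans (Matrix.rank_mul_le_left _ _)
      (le_trans (Matrix.rank_le_card_width _) (by simp))
  omega

end LB

section LBapps

variable {F : Type*} [Field F]

lemma collapse3 {ι₁ ι₂ ι₃ : Type*} [Fintype ι₁] [Fintype ι₂] [Fintype ι₃]
    [DecidableEq ι₁] [DecidableEq ι₂] [DecidableEq ι₃]
    (T : Tensor F ι₁ ι₂ ι₃) (I : ι₁) (J : ι₂) (K : ι₃) :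
    (∑ i, ∑ j, ∑ k, (if i = I then (1 : F) else 0) * (if j = J then 1 else 0)
      * (if k = K then 1 else 0) * T i j k) = T I J K := by
  have e0 : ∀ (i : ι₁) (j : ι₂) (k : ι₃),
      (if i = I then (1 : F) else 0) * (if j = J then 1 else 0)
        * (if k = K then 1 else 0) * T i j k
      = if k = K then (if j = J then (if i = I then T i j k else 0) else 0) else 0 := by
    intros; split_ifs <;> simp
  simp only [e0, Finset.sum_ite_eq', Finset.mem_univ, if_true]

lemma lb_sq {n p : ℕ} (hp : 1 ≤ p) : n * n ≤ borderRank (MM F n n p) := by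
  have := lb_of_diag_family (J := Fin n × Fin n) (t := MM F n n p)
    (fun α i => if i = α then 1 else 0)
    (fun β j => if j = (β.2, (⟨0, hp⟩ : Fin p)) then 1 else 0)
    (fun β k => if k = (β.1, (⟨0, hp⟩ : Fin p)) then 1 else 0)
    ?_ (borderDecomp_borderRank _)
  · simpa using this
  · intro α β
    rw [collapse3]
    simp only [MM]
    refine if_congr ?_ rfl rfl
    constructor
    · rintro ⟨h1, h2, -⟩
      exact Prod.ext h1 h2
    · rintro rfl
      exact ⟨rfl, rfl, trivial⟩

lemma lb_diag_mm {r m P : ℕ} (hP : 1 ≤ P) :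
    r * (m * m) ≤ borderRank (tmul (diagT F r) (MM F m m P)) := by
  have := lb_of_diag_family (J := Fin r × (Fin m × Fin m))
    (t := tmul (diagT F r) (MM F m m P))
    (fun α i => if i = α then 1 else 0)
    (fun β j => if j = (β.1, (β.2.2, (⟨0, hP⟩ : Fin P))) then 1 else 0)
    (fun β k => if k = (β.1, (β.2.1, (⟨0, hP⟩ : Fin P))) then 1 else 0)
    ?_ (borderDecomp_borderRank _)
  · simpa using this
  · intro α β
    rw [collapse3]
    simp only [tmul, diagT, MM, ite_one_zero_mul]
    refine if_congr ?_ rfl rfl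
    constructor
    · rintro ⟨⟨h1, -⟩, h2, h3, -⟩
      exact Prod.ext h1 (Prod.ext h2 h3)
    · rintro rfl
      refine ⟨⟨rfl, trivial⟩, rfl, rfl, trivial⟩

end LBapps

section Blocks

variable {F : Type*} [Field F]

lemma sum_dite_subtype {α M : Type*} [Fintype α] [AddCommMonoid M] (s : Finset α)
    (f : α → M) (hf : ∀ a ∉ s, f a = 0) : ∑ a : α, f a = ∑ a : ↥s, f ↑a :=
  ((Finset.sum_subset s.subset_univ fun x _ hx => hf x hx).symm).trans
    (Finset.sum_coe_sort s f).symm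

lemma degen_blocks {ι₁ ι₂ ι₃ : Type*}
    [Fintype ι₁] [Fintype ι₂] [Fintype ι₃]
    [DecidableEq ι₁] [DecidableEq ι₂] [DecidableEq ι₃]
    (t : Tensor F ι₁ ι₂ ι₃) (r m : ℕ)
    (Sx : Fin r → Finset ι₁) (Sy : Fin r → Finset ι₂) (Sz : Fin r → Finset ι₃)
    (hcross : ∀ l l' l'' : Fin r, ¬(l = l' ∧ l' = l'') →
      ∀ i ∈ Sx l, ∀ j ∈ Sy l', ∀ k ∈ Sz l'', t i j k = 0)
    (P : Fin r → ℕ)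
    (hiso : ∀ l, TIso (fun (i : ↥(Sx l)) (j : ↥(Sy l)) (k : ↥(Sz l)) =>
      t (i : ι₁) (j : ι₂) (k : ι₃)) (MM F m m (P l)))
    (Pm : ℕ) (hPm : ∀ l, Pm ≤ P l) :
    Degen t (tmul (diagT F r) (MM F m m Pm)) := by
  choose A A' B B' Cc C' h using hiso
  have heq : ∀ (l : Fin r) (a : Fin m × Fin m) (b : Fin m × Fin (P l))
      (c : Fin m × Fin (P l)), MM F m m (P l) a b c
      = ∑ i : ↥(Sx l), ∑ j : ↥(Sy l), ∑ k : ↥(Sz l),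
          A l a i * B l b j * Cc l c k * t ↑i ↑j ↑k :=
    fun l => (h l).2.2.2.2.2.2
  refine degen_of_scalar
    (fun (a : Fin r × (Fin m × Fin m)) (i : ι₁) =>
      if hi : i ∈ Sx a.1 then A a.1 a.2 ⟨i, hi⟩ else 0)
    (fun (b : Fin r × (Fin m × Fin Pm)) (j : ι₂) =>
      if hj : j ∈ Sy b.1 then B b.1 (b.2.1, Fin.castLE (hPm b.1) b.2.2) ⟨j, hj⟩ else 0)
    (fun (c : Fin r × (Fin m × Fin Pm)) (k : ι₃) =>
      if hk : k ∈ Sz c.1 then Cc c.1 (c.2.1, Fin.castLE (hPm c.1) c.2.2) ⟨k, hk⟩ else 0)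
    ?_
  rintro ⟨l, a⟩ ⟨l', b⟩ ⟨l'', c⟩
  have st1 : (∑ i, ∑ j, ∑ k,
      (if hi : i ∈ Sx l then A l a ⟨i, hi⟩ else 0)
        * (if hj : j ∈ Sy l' then B l' (b.1, Fin.castLE (hPm l') b.2) ⟨j, hj⟩ else 0)
        * (if hk : k ∈ Sz l'' then Cc l'' (c.1, Fin.castLE (hPm l'') c.2) ⟨k, hk⟩ else 0)
        * t i j k)
      = ∑ i : ↥(Sx l), ∑ j : ↥(Sy l'), ∑ k : ↥(Sz l''),
          A l a i * B l' (b.1, Fin.castLE (hPm l') b.2) j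
            * Cc l'' (c.1, Fin.castLE (hPm l'') c.2) k * t ↑i ↑j ↑k := by
    rw [sum_dite_subtype (Sx l) _ (fun i hi => Finset.sum_eq_zero fun j _ =>
      Finset.sum_eq_zero fun k _ => by rw [dif_neg hi, zero_mul, zero_mul, zero_mul])]
    refine Finset.sum_congr rfl fun i _ => ?_
    rw [sum_dite_subtype (Sy l') _ (fun j hj => Finset.sum_eq_zero fun k _ => by
      rw [dif_neg hj]; ring)]
    refine Finset.sum_congr rfl fun j _ => ?_
    rw [sum_dite_subtype (Sz l'') _ (fun k hk => by rw [dif_neg hk]; ring)]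
    refine Finset.sum_congr rfl fun k _ => ?_
    rw [dif_pos i.2, dif_pos j.2, dif_pos k.2]
  rw [st1]
  by_cases hl : l = l' ∧ l' = l''
  · obtain ⟨rfl, rfl⟩ := hl
    rw [← heq l a (b.1, Fin.castLE (hPm l) b.2) (c.1, Fin.castLE (hPm l) c.2)]
    have hone : diagT F r l l l = 1 := by
      unfold diagT; rw [if_pos ⟨rfl, rfl⟩]
    show diagT F r l l l * MM F m m Pm a b c = _
    rw [hone, one_mul]
    unfold MM
    refine if_congr ?_ rfl rfl
    simp [Fin.castLE_inj]
  · have hz : tmul (diagT F r) (MM F m m Pm) (l, a) (l', b) (l'', c) = 0 := by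
      simp only [tmul, diagT]
      rw [if_neg hl, zero_mul]
    rw [hz]
    symm
    exact Finset.sum_eq_zero fun i _ => Finset.sum_eq_zero fun j _ =>
      Finset.sum_eq_zero fun k _ => by
        rw [hcross l l' l'' hl ↑i i.2 ↑j j.2 ↑k k.2]; ring

end Blocks

section Analytic

open Real

variable {F : Type*} [Field F]

/-- The set whose infimum is `omegaExp`. -/
def SS (F : Type*) [Field F] (κ : ℝ) : Set ℝ :=
  {τ : ℝ | ∃ C : ℝ, ∀ n : ℕ, 1 ≤ n →
    (borderRank (MM F n n (Nat.ceil ((n : ℝ) ^ κ))) : ℝ) ≤ C * (n : ℝ) ^ τ}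

lemma omegaExp_eq (κ : ℝ) : omegaExp F κ = sInf (SS F κ) := rfl

set_option maxHeartbeats 2000000 in
lemma SS_claim {κ : ℝ} (hκ : 0 ≤ κ) {r m P R : ℕ}
    (hm : 2 ≤ m) (hr : 1 ≤ r) (hPc : ((m : ℝ)) ^ κ ≤ (P : ℝ)) (hR : 1 ≤ R)
    (hkey : ∀ N a b : ℕ, borderRank (MM F a a b) ≤ r ^ N →
      borderRank (MM F (a * m ^ N) (a * m ^ N) (b * P ^ N)) ≤ R ^ N)
    {τ : ℝ} (hτ2 : 2 ≤ τ) (hτ : τ ∈ SS F κ) :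
    max (Real.logb m R - Real.logb m r)
      (τ * Real.logb m R / (τ + Real.logb m r)) ∈ SS F κ := by
  classical
  obtain ⟨C0, hC0⟩ := hτ
  set C : ℝ := max C0 1 with hCdef
  have hC1 : (1 : ℝ) ≤ C := le_max_right _ _
  have hC0' : (0 : ℝ) < C := lt_of_lt_of_le one_pos hC1
  have hCb : ∀ n : ℕ, 1 ≤ n →
      (borderRank (MM F n n (Nat.ceil ((n : ℝ) ^ κ))) : ℝ) ≤ C * (n : ℝ) ^ τ := by
    intro n hn
    refine le_trans (hC0 n hn) ?_
    exact mul_le_mul_of_nonneg_right (le_max_left _ _) (Real.rpow_nonneg (Nat.cast_nonneg n) τ)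
  set ρ : ℝ := Real.logb m r with hρdef
  set L : ℝ := Real.logb m R with hLdef
  have hm0 : (0 : ℝ) ≤ (m : ℝ) := Nat.cast_nonneg m
  have hm1 : (1 : ℝ) < (m : ℝ) := by exact_mod_cast lt_of_lt_of_le one_lt_two (by exact_mod_cast hm)
  have hm1' : (1 : ℝ) ≤ (m : ℝ) := le_of_lt hm1
  have hr1 : (1 : ℝ) ≤ (r : ℝ) := by exact_mod_cast hr
  have hR1 : (1 : ℝ) ≤ (R : ℝ) := by exact_mod_cast hR
  have hrρ : (m : ℝ) ^ ρ = (r : ℝ) :=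
    Real.rpow_logb (lt_trans one_pos hm1) (ne_of_gt hm1) (lt_of_lt_of_le one_pos hr1)
  have hRL : (m : ℝ) ^ L = (R : ℝ) :=
    Real.rpow_logb (lt_trans one_pos hm1) (ne_of_gt hm1) (lt_of_lt_of_le one_pos hR1)
  have hρ0 : 0 ≤ ρ := Real.logb_nonneg hm1 hr1
  have hL0 : 0 ≤ L := Real.logb_nonneg hm1 hR1
  have hτ0 : (0 : ℝ) < τ := lt_of_lt_of_le two_pos hτ2
  have hτρ : (0 : ℝ) < τ + ρ := by linarith
  set fτ : ℝ := max (L - ρ) (τ * L / (τ + ρ)) with hfτdef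
  have hfτ₀ : L - ρ ≤ fτ := le_max_left _ _
  have hfτL : τ * L / (τ + ρ) ≤ fτ := le_max_right _ _
  have hfτ0 : 0 ≤ fτ :=
    le_trans (div_nonneg (mul_nonneg (le_of_lt hτ0) hL0) (le_of_lt hτρ)) hfτL
  -- the scale sequence
  set xs : ℕ → ℝ := fun N => ((r : ℝ) ^ N / C) ^ (1 / τ) with hxsdef
  set as : ℕ → ℕ := fun N => max 1 (Nat.floor (xs N)) with hasdef
  set ns : ℕ → ℕ := fun N => as N * m ^ N with hnsdef
  have hx0 : ∀ N, 0 ≤ xs N := fun N =>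
    Real.rpow_nonneg (div_nonneg (pow_nonneg (by linarith) N) (le_of_lt hC0')) _
  have ha1 : ∀ N, 1 ≤ as N := fun N => le_max_left _ _
  have ha0 : ∀ N, (0 : ℝ) < (as N : ℝ) := fun N => by exact_mod_cast ha1 N
  have hn1 : ∀ N, 1 ≤ ns N := fun N =>
    Nat.one_le_iff_ne_zero.mpr (Nat.mul_ne_zero
      (Nat.one_le_iff_ne_zero.mp (ha1 N)) (pow_ne_zero N (by omega)))
  have hxτ : ∀ N, (xs N) ^ τ = (r : ℝ) ^ N / C := by
    intro N
    rw [hxsdef]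
    rw [← Real.rpow_mul (div_nonneg (pow_nonneg (by linarith) N) (le_of_lt hC0'))]
    rw [one_div_mul_cancel (ne_of_gt hτ0), Real.rpow_one]
  have haxle : ∀ N, (as N : ℝ) ≤ max 1 (xs N) := by
    intro N
    by_cases h0 : Nat.floor (xs N) = 0
    · have : as N = 1 := by simp only [hasdef]; omega
      rw [this]; exact_mod_cast le_max_left 1 (xs N)
    · have h1 : 1 ≤ Nat.floor (xs N) := Nat.one_le_iff_ne_zero.mpr h0
      have : as N = Nat.floor (xs N) := max_eq_right h1
      rw [this]
      exact le_trans (Nat.floor_le (hx0 N)) (le_max_right _ _)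
  have hmax2a : ∀ N, max 1 (xs N) ≤ 2 * (as N : ℝ) := by
    intro N
    have h2a : (1 : ℝ) ≤ 2 * (as N : ℝ) := by
      have := ha0 N
      nlinarith [ha0 N, (by exact_mod_cast ha1 N : (1:ℝ) ≤ (as N : ℝ))]
    refine max_le h2a ?_
    by_cases hx1 : xs N < 1
    · linarith
    · push_neg at hx1
      have h1 : 1 ≤ Nat.floor (xs N) := Nat.le_floor (by exact_mod_cast hx1)
      have haeq : as N = Nat.floor (xs N) := max_eq_right h1
      have h2 : xs N < Nat.floor (xs N) + 1 := Nat.lt_floor_add_one _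
      have h3 : (Nat.floor (xs N) : ℝ) + 1 ≤ 2 * Nat.floor (xs N) := by
        have : (1 : ℝ) ≤ (Nat.floor (xs N) : ℝ) := by exact_mod_cast h1
        linarith
      rw [haeq]
      linarith
  have haub : ∀ N, (as N : ℝ) ≤ (m : ℝ) ^ (ρ * N / τ) := by
    intro N
    have hxle : xs N ≤ (m : ℝ) ^ (ρ * N / τ) := by
      have h1 : (r : ℝ) ^ N / C ≤ (r : ℝ) ^ N :=
        div_le_self (pow_nonneg (by linarith) N) hC1
      have h2 : xs N ≤ ((r : ℝ) ^ N) ^ (1 / τ) :=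
        Real.rpow_le_rpow (div_nonneg (pow_nonneg (by linarith) N) (le_of_lt hC0'))
          h1 (by positivity)
      have h3 : ((r : ℝ) ^ N) ^ (1 / τ) = (m : ℝ) ^ (ρ * N / τ) := by
        rw [← hrρ, ← Real.rpow_natCast ((m : ℝ) ^ ρ) N, ← Real.rpow_mul (by linarith),
          ← Real.rpow_mul (by linarith)]
        ring_nf
      rw [← h3]; exact h2
    have hge1 : (1 : ℝ) ≤ (m : ℝ) ^ (ρ * N / τ) := by
      rw [show (1 : ℝ) = (m : ℝ) ^ (0 : ℝ) from (Real.rpow_zero _).symm]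
      exact Real.rpow_le_rpow_of_exponent_le hm1' (by positivity)
    exact le_trans (haxle N) (max_le hge1 hxle)
  have hAub : ∀ N, (as N : ℝ) ^ τ ≤ (r : ℝ) ^ N := by
    intro N
    by_cases h0 : Nat.floor (xs N) = 0
    · have : as N = 1 := by simp only [hasdef]; omega
      rw [this]
      simp only [Nat.cast_one, Real.one_rpow]
      exact one_le_pow₀ hr1
    · have h1 : 1 ≤ Nat.floor (xs N) := Nat.one_le_iff_ne_zero.mpr h0
      have haeq : as N = Nat.floor (xs N) := max_eq_right h1
      have h2 : (as N : ℝ) ≤ xs N := by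
        rw [haeq]; exact Nat.floor_le (hx0 N)
      have h3 : (as N : ℝ) ^ τ ≤ (xs N) ^ τ :=
        Real.rpow_le_rpow (le_of_lt (ha0 N)) h2 (le_of_lt hτ0)
      rw [hxτ N] at h3
      exact le_trans h3 (div_le_self (pow_nonneg (by linarith) N) hC1)
  have hnsc : ∀ N, ((ns N : ℕ) : ℝ) = (as N : ℝ) * (m : ℝ) ^ N := by
    intro N; simp only [hnsdef]; push_cast; ring
  have hmexp2 : ∀ (N : ℕ) (s : ℝ), ((m : ℝ) ^ N) ^ s = (m : ℝ) ^ ((N : ℝ) * s) := by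
    intro N s
    rw [← Real.rpow_natCast (m : ℝ) N, ← Real.rpow_mul hm0]
  have hF1 : ∀ N, borderRank (MM F (as N) (as N) (Nat.ceil ((as N : ℝ) ^ κ))) ≤ r ^ N := by
    intro N
    by_cases h0 : Nat.floor (xs N) = 0
    · have haeq : as N = 1 := by simp only [hasdef]; omega
      rw [haeq]
      have hceil : Nat.ceil (((1 : ℕ) : ℝ) ^ κ) = 1 := by
        rw [Nat.cast_one, Real.one_rpow, Nat.ceil_one]
      rw [hceil]
      calc borderRank (MM F 1 1 1) ≤ 1 * 1 * 1 :=
            borderRank_le_of_decomp (borderDecomp_MM 1 1 1)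
        _ = 1 := by norm_num
        _ ≤ r ^ N := Nat.one_le_pow N r (by omega)
    · have h1 : 1 ≤ Nat.floor (xs N) := Nat.one_le_iff_ne_zero.mpr h0
      have haeq : as N = Nat.floor (xs N) := max_eq_right h1
      have hb := hCb (as N) (ha1 N)
      have h2 : (as N : ℝ) ≤ xs N := by rw [haeq]; exact Nat.floor_le (hx0 N)
      have h3 : (as N : ℝ) ^ τ ≤ (r : ℝ) ^ N / C := by
        rw [← hxτ N]
        exact Real.rpow_le_rpow (le_of_lt (ha0 N)) h2 (le_of_lt hτ0)
      have h4 : C * (as N : ℝ) ^ τ ≤ (r : ℝ) ^ N := by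
        have h5 : C * ((r : ℝ) ^ N / C) = (r : ℝ) ^ N := by field_simp
        calc C * (as N : ℝ) ^ τ ≤ C * ((r : ℝ) ^ N / C) :=
              mul_le_mul_of_nonneg_left h3 (le_of_lt hC0')
          _ = (r : ℝ) ^ N := h5
      have := le_trans hb h4
      exact_mod_cast this
  have hq2 : ∀ N, Nat.ceil ((ns N : ℝ) ^ κ) ≤ Nat.ceil ((as N : ℝ) ^ κ) * P ^ N := by
    intro N
    refine Nat.ceil_le.mpr ?_
    rw [hnsc N]
    rw [Real.mul_rpow (le_of_lt (ha0 N)) (pow_nonneg hm0 N)]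
    have hmP : ((m : ℝ) ^ N) ^ κ ≤ (P : ℝ) ^ N := by
      rw [hmexp2 N κ, mul_comm, Real.rpow_mul hm0, Real.rpow_natCast]
      exact pow_le_pow_left₀ (Real.rpow_nonneg hm0 κ) hPc N
    push_cast
    exact mul_le_mul (Nat.le_ceil _) hmP
      (Real.rpow_nonneg (pow_nonneg hm0 N) κ) (Nat.cast_nonneg _)
  have hF3 : ∀ N, borderRank (MM F (ns N) (ns N) (Nat.ceil ((ns N : ℝ) ^ κ))) ≤ R ^ N := by
    intro N
    have h1 := hkey N (as N) (Nat.ceil ((as N : ℝ) ^ κ)) (hF1 N)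
    have hns : ns N = as N * m ^ N := by simp only [hnsdef]
    rw [hns]
    refine le_trans (borderRank_MM_mono (le_refl _) ?_) h1
    rw [← hns]
    exact hq2 N
  have hF4 : ∀ N, ((r : ℝ)) ^ N ≤ C * 2 ^ (τ : ℝ) * (as N : ℝ) ^ τ := by
    intro N
    have h1 : (r : ℝ) ^ N = C * (xs N) ^ τ := by rw [hxτ]; field_simp
    have h2 : xs N ≤ 2 * (as N : ℝ) := le_trans (le_max_right 1 _) (hmax2a N)
    have h3 : (xs N) ^ τ ≤ (2 * (as N : ℝ)) ^ τ :=
      Real.rpow_le_rpow (hx0 N) h2 (le_of_lt hτ0)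
    have h4 : ((2 : ℝ) * (as N : ℝ)) ^ τ = 2 ^ (τ : ℝ) * (as N : ℝ) ^ τ :=
      Real.mul_rpow (by norm_num) (le_of_lt (ha0 N))
    calc (r : ℝ) ^ N = C * (xs N) ^ τ := h1
      _ ≤ C * ((2 : ℝ) * (as N : ℝ)) ^ τ := mul_le_mul_of_nonneg_left h3 (le_of_lt hC0')
      _ = C * 2 ^ (τ : ℝ) * (as N : ℝ) ^ τ := by rw [h4]; ring
  have hC1' : ∀ N, (as N : ℝ) ^ τ * ((m : ℝ) ^ (L - ρ)) ^ N ≤ (ns N : ℝ) ^ fτ := by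
    intro N
    have hmexp : ∀ s : ℝ, ((m : ℝ) ^ s) ^ N = (m : ℝ) ^ (s * N) := by
      intro s
      rw [← Real.rpow_natCast ((m : ℝ) ^ s) N, ← Real.rpow_mul hm0]
    have hrhs : (ns N : ℝ) ^ fτ = (as N : ℝ) ^ fτ * (m : ℝ) ^ ((N : ℝ) * fτ) := by
      rw [hnsc N, Real.mul_rpow (le_of_lt (ha0 N)) (pow_nonneg hm0 N), hmexp2 N fτ]
    have hsplit : (as N : ℝ) ^ τ = (as N : ℝ) ^ fτ * (as N : ℝ) ^ (τ - fτ) := by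
      rw [← Real.rpow_add (ha0 N)]; ring_nf
    rw [hrhs, hsplit, hmexp (L - ρ), mul_assoc]
    refine mul_le_mul_of_nonneg_left ?_ (Real.rpow_nonneg (le_of_lt (ha0 N)) fτ)
    by_cases hcase : τ ≤ fτ
    · have e1 : (as N : ℝ) ^ (τ - fτ) ≤ 1 :=
        Real.rpow_le_one_of_one_le_of_nonpos (by exact_mod_cast ha1 N) (by linarith)
      have e2 : (m : ℝ) ^ ((L - ρ) * N) ≤ (m : ℝ) ^ ((N : ℝ) * fτ) := by
        refine Real.rpow_le_rpow_of_exponent_le hm1' ?_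
        have hN0 : (0 : ℝ) ≤ (N : ℝ) := Nat.cast_nonneg N
        nlinarith [hfτ₀]
      calc (as N : ℝ) ^ (τ - fτ) * (m : ℝ) ^ ((L - ρ) * N)
          ≤ 1 * (m : ℝ) ^ ((L - ρ) * N) :=
            mul_le_mul_of_nonneg_right e1 (Real.rpow_nonneg hm0 _)
        _ = (m : ℝ) ^ ((L - ρ) * N) := one_mul _
        _ ≤ (m : ℝ) ^ ((N : ℝ) * fτ) := e2
    · push_neg at hcase
      have e1 : (as N : ℝ) ^ (τ - fτ) ≤ ((m : ℝ) ^ (ρ * N / τ)) ^ (τ - fτ) :=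
        Real.rpow_le_rpow (le_of_lt (ha0 N)) (haub N) (by linarith)
      have e2 : ((m : ℝ) ^ (ρ * N / τ)) ^ (τ - fτ) = (m : ℝ) ^ (ρ * N / τ * (τ - fτ)) :=
        (Real.rpow_mul hm0 _ _).symm
      have h' : τ * L ≤ fτ * (τ + ρ) := by
        have := hfτL
        rw [div_le_iff₀ hτρ] at this
        linarith
      have hcoef : ρ * (τ - fτ) / τ + (L - ρ) ≤ fτ := by
        rw [← sub_nonneg]
        have heq : fτ - (ρ * (τ - fτ) / τ + (L - ρ)) = (fτ * (τ + ρ) - τ * L) / τ := by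
          field_simp; ring
        rw [heq]
        exact div_nonneg (by linarith) (le_of_lt hτ0)
      have hexp : ρ * (N : ℝ) / τ * (τ - fτ) + (L - ρ) * N ≤ (N : ℝ) * fτ := by
        have h2 : ρ * (N : ℝ) / τ * (τ - fτ) + (L - ρ) * N
            = (ρ * (τ - fτ) / τ + (L - ρ)) * N := by ring
        rw [h2]
        calc (ρ * (τ - fτ) / τ + (L - ρ)) * N ≤ fτ * N :=
              mul_le_mul_of_nonneg_right hcoef (Nat.cast_nonneg N)
          _ = (N : ℝ) * fτ := mul_comm _ _
      calc (as N : ℝ) ^ (τ - fτ) * (m : ℝ) ^ ((L - ρ) * N)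
          ≤ (m : ℝ) ^ (ρ * N / τ * (τ - fτ)) * (m : ℝ) ^ ((L - ρ) * N) := by
            rw [← e2]
            exact mul_le_mul_of_nonneg_right e1 (Real.rpow_nonneg hm0 _)
        _ = (m : ℝ) ^ (ρ * N / τ * (τ - fτ) + (L - ρ) * N) :=
            (Real.rpow_add (lt_trans one_pos hm1) _ _).symm
        _ ≤ (m : ℝ) ^ ((N : ℝ) * fτ) := Real.rpow_le_rpow_of_exponent_le hm1' hexp
  -- the covering constant
  set Kr : ℝ := 2 * (r : ℝ) ^ (1 / τ : ℝ) * m with hKrdef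
  have hrp1 : (1 : ℝ) ≤ (r : ℝ) ^ (1 / τ : ℝ) := by
    rw [show (1 : ℝ) = (r : ℝ) ^ (0 : ℝ) from (Real.rpow_zero _).symm]
    exact Real.rpow_le_rpow_of_exponent_le hr1 (by positivity)
  have hKr1 : (1 : ℝ) ≤ Kr := by
    rw [hKrdef]
    nlinarith [hrp1, hm1]
  have hF6 : ∀ N, ((ns (N + 1) : ℕ) : ℝ) ≤ Kr * ns N := by
    intro N
    have hxsucc : xs (N + 1) = xs N * (r : ℝ) ^ (1 / τ : ℝ) := by
      simp only [hxsdef]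
      rw [show ((r : ℝ) ^ (N + 1) / C) = ((r : ℝ) ^ N / C) * r by rw [pow_succ]; ring]
      exact Real.mul_rpow (div_nonneg (pow_nonneg (by linarith) N) (le_of_lt hC0'))
        (by linarith)
    have hasucc : (as (N + 1) : ℝ) ≤ max 1 (xs N) * (r : ℝ) ^ (1 / τ : ℝ) := by
      refine le_trans (haxle (N + 1)) ?_
      rw [hxsucc]
      refine max_le ?_ (mul_le_mul_of_nonneg_right (le_max_right 1 _)
        (Real.rpow_nonneg (by linarith) _))
      nlinarith [le_max_left 1 (xs N), hrp1]
    have hasucc2 : (as (N + 1) : ℝ) ≤ 2 * (as N : ℝ) * (r : ℝ) ^ (1 / τ : ℝ) :=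
      le_trans hasucc (mul_le_mul_of_nonneg_right (hmax2a N)
        (Real.rpow_nonneg (by linarith) _))
    calc ((ns (N + 1) : ℕ) : ℝ) = (as (N + 1) : ℝ) * ((m : ℝ) ^ N * m) := by
          rw [hnsc (N + 1)]; rw [pow_succ]
      _ ≤ (2 * (as N : ℝ) * (r : ℝ) ^ (1 / τ : ℝ)) * ((m : ℝ) ^ N * m) :=
          mul_le_mul_of_nonneg_right hasucc2 (by positivity)
      _ = Kr * ((as N : ℝ) * (m : ℝ) ^ N) := by rw [hKrdef]; ring
      _ = Kr * ns N := by rw [← hnsc N]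
  -- conclusion
  refine ⟨C * 2 ^ (τ : ℝ) * Kr ^ fτ, ?_⟩
  intro n hn
  have hex : ∃ N, n ≤ ns N := by
    refine ⟨n, ?_⟩
    have h1 : n ≤ 2 ^ n := le_of_lt (Nat.lt_two_pow_self (n := n))
    have h2 : 2 ^ n ≤ m ^ n := Nat.pow_le_pow_left hm n
    have h3 : m ^ n ≤ as n * m ^ n := Nat.le_mul_of_pos_left _ (ha1 n)
    simp only [hnsdef]
    omega
  obtain ⟨N, hN, hminN⟩ : ∃ N, n ≤ ns N ∧ ∀ N', N' < N → ns N' < n :=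
    ⟨Nat.find hex, Nat.find_spec hex, fun N' hlt => by
      have := Nat.find_min hex hlt; omega⟩
  have hcov : ((ns N : ℕ) : ℝ) ≤ Kr * n := by
    cases N with
    | zero =>
        have hxle : xs 0 ≤ 1 := by
          simp only [hxsdef]
          refine Real.rpow_le_one (div_nonneg (by positivity) (le_of_lt hC0')) ?_
            (by positivity)
          rw [pow_zero]
          exact (div_le_one hC0').mpr hC1
        have hfl : Nat.floor (xs 0) ≤ 1 := by
          calc Nat.floor (xs 0) ≤ Nat.floor (1 : ℝ) := Nat.floor_le_floor hxle
            _ = 1 := Nat.floor_one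
        have ha : as 0 = 1 := by simp only [hasdef]; omega
        have hns0 : ns 0 = 1 := by simp only [hnsdef, ha, pow_zero]; rfl
        rw [hns0]
        have h1n : (1 : ℝ) ≤ (n : ℝ) := by exact_mod_cast hn
        push_cast
        nlinarith [hKr1, h1n]
    | succ N' =>
        have hmin : ns N' < n := hminN N' (by omega)
        have h1 : ((ns N' : ℕ) : ℝ) ≤ (n : ℝ) := by
          have : ns N' ≤ n := le_of_lt hmin
          exact_mod_cast this
        calc ((ns (N' + 1) : ℕ) : ℝ) ≤ Kr * ns N' := hF6 N'
          _ ≤ Kr * n := mul_le_mul_of_nonneg_left h1 (by linarith)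
  have hmono : borderRank (MM F n n (Nat.ceil ((n : ℝ) ^ κ)))
      ≤ borderRank (MM F (ns N) (ns N) (Nat.ceil ((ns N : ℝ) ^ κ))) := by
    refine borderRank_MM_mono hN (Nat.ceil_le_ceil ?_)
    exact Real.rpow_le_rpow (Nat.cast_nonneg n) (by exact_mod_cast hN) hκ
  have hRsplit : (R : ℝ) = (r : ℝ) * (m : ℝ) ^ (L - ρ) := by
    rw [← hrρ, ← Real.rpow_add (lt_trans one_pos hm1)]
    rw [show ρ + (L - ρ) = L from by ring, hRL]
  have hchain : ((R ^ N : ℕ) : ℝ) ≤ C * 2 ^ (τ : ℝ) * Kr ^ fτ * (n : ℝ) ^ fτ := by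
    have e0 : ((R ^ N : ℕ) : ℝ) = ((r : ℝ) ^ N) * (((m : ℝ) ^ (L - ρ)) ^ N) := by
      push_cast
      rw [hRsplit, mul_pow]
    rw [e0]
    have s1 : ((r : ℝ) ^ N) * (((m : ℝ) ^ (L - ρ)) ^ N)
        ≤ (C * 2 ^ (τ : ℝ) * (as N : ℝ) ^ τ) * (((m : ℝ) ^ (L - ρ)) ^ N) :=
      mul_le_mul_of_nonneg_right (hF4 N) (by positivity)
    have s2 : (C * 2 ^ (τ : ℝ) * (as N : ℝ) ^ τ) * (((m : ℝ) ^ (L - ρ)) ^ N)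
        = C * 2 ^ (τ : ℝ) * ((as N : ℝ) ^ τ * (((m : ℝ) ^ (L - ρ)) ^ N)) := by ring
    have s3 : C * 2 ^ (τ : ℝ) * ((as N : ℝ) ^ τ * (((m : ℝ) ^ (L - ρ)) ^ N))
        ≤ C * 2 ^ (τ : ℝ) * ((ns N : ℕ) : ℝ) ^ fτ :=
      mul_le_mul_of_nonneg_left (hC1' N) (by positivity)
    have s4 : ((ns N : ℕ) : ℝ) ^ fτ ≤ (Kr * n) ^ fτ :=
      Real.rpow_le_rpow (Nat.cast_nonneg _) hcov hfτ0
    have s5 : ((Kr * n) : ℝ) ^ fτ = Kr ^ fτ * (n : ℝ) ^ fτ :=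
      Real.mul_rpow (by linarith) (Nat.cast_nonneg n)
    calc ((r : ℝ) ^ N) * (((m : ℝ) ^ (L - ρ)) ^ N)
        ≤ C * 2 ^ (τ : ℝ) * ((as N : ℝ) ^ τ * (((m : ℝ) ^ (L - ρ)) ^ N)) := by
          rw [← s2]; exact s1
      _ ≤ C * 2 ^ (τ : ℝ) * ((ns N : ℕ) : ℝ) ^ fτ := s3
      _ ≤ C * 2 ^ (τ : ℝ) * (Kr ^ fτ * (n : ℝ) ^ fτ) := by
          rw [← s5]
          exact mul_le_mul_of_nonneg_left s4 (by positivity)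
      _ = C * 2 ^ (τ : ℝ) * Kr ^ fτ * (n : ℝ) ^ fτ := by ring
  calc (borderRank (MM F n n (Nat.ceil ((n : ℝ) ^ κ))) : ℝ)
      ≤ ((R ^ N : ℕ) : ℝ) := by exact_mod_cast le_trans hmono (hF3 N)
    _ ≤ C * 2 ^ (τ : ℝ) * Kr ^ fτ * (n : ℝ) ^ fτ := hchain

end Analytic

section Endgame

open Real

variable {F : Type*} [Field F]

lemma SS_trivial {κ : ℝ} (hκ : 0 ≤ κ) : (2 + κ) ∈ SS F κ := by
  refine ⟨2, fun n hn => ?_⟩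
  have hn1 : (1 : ℝ) ≤ (n : ℝ) := by exact_mod_cast hn
  have hn0 : (0 : ℝ) < (n : ℝ) := lt_of_lt_of_le one_pos hn1
  have hbr : borderRank (MM F n n (Nat.ceil ((n : ℝ) ^ κ))) ≤ n * n * Nat.ceil ((n : ℝ) ^ κ) :=
    borderRank_le_of_decomp (borderDecomp_MM _ _ _)
  have hκ1 : (1 : ℝ) ≤ (n : ℝ) ^ κ := by
    rw [show (1 : ℝ) = (n : ℝ) ^ (0 : ℝ) from (Real.rpow_zero _).symm]
    exact Real.rpow_le_rpow_of_exponent_le hn1 hκ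
  have hceil : ((Nat.ceil ((n : ℝ) ^ κ) : ℕ) : ℝ) ≤ 2 * (n : ℝ) ^ κ := by
    have h1 : ((Nat.ceil ((n : ℝ) ^ κ) : ℕ) : ℝ) < (n : ℝ) ^ κ + 1 :=
      Nat.ceil_lt_add_one (Real.rpow_nonneg (le_of_lt hn0) κ)
    linarith
  have hsplit : (n : ℝ) ^ (2 + κ : ℝ) = (n : ℝ) * (n : ℝ) * (n : ℝ) ^ κ := by
    rw [Real.rpow_add hn0]
    have : (n : ℝ) ^ (2 : ℝ) = (n : ℝ) * (n : ℝ) := by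
      rw [show (2 : ℝ) = ((2 : ℕ) : ℝ) by norm_num, Real.rpow_natCast]
      ring
    rw [this]
  have hcast : (borderRank (MM F n n (Nat.ceil ((n : ℝ) ^ κ))) : ℝ)
      ≤ (n : ℝ) * (n : ℝ) * ((Nat.ceil ((n : ℝ) ^ κ) : ℕ) : ℝ) := by
    exact_mod_cast hbr
  rw [hsplit]
  calc (borderRank (MM F n n (Nat.ceil ((n : ℝ) ^ κ))) : ℝ)
      ≤ (n : ℝ) * (n : ℝ) * ((Nat.ceil ((n : ℝ) ^ κ) : ℕ) : ℝ) := hcast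
    _ ≤ (n : ℝ) * (n : ℝ) * (2 * (n : ℝ) ^ κ) :=
        mul_le_mul_of_nonneg_left hceil (by positivity)
    _ = 2 * ((n : ℝ) * (n : ℝ) * (n : ℝ) ^ κ) := by ring

lemma SS_ge_two {κ : ℝ} : ∀ τ ∈ SS F κ, (2 : ℝ) ≤ τ := by
  rintro τ ⟨C, hC⟩
  by_contra hτ
  push_neg at hτ
  have hsq : ∀ n : ℕ, 1 ≤ n → (n : ℝ) * (n : ℝ) ≤ C * (n : ℝ) ^ τ := by
    intro n hn
    have hp : 1 ≤ Nat.ceil ((n : ℝ) ^ κ) := by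
      refine Nat.one_le_iff_ne_zero.mpr (Nat.pos_iff_ne_zero.mp (Nat.ceil_pos.mpr ?_))
      exact Real.rpow_pos_of_pos (by exact_mod_cast hn) κ
    have h1 : n * n ≤ borderRank (MM F n n (Nat.ceil ((n : ℝ) ^ κ))) := lb_sq hp
    have h2 : ((n * n : ℕ) : ℝ) ≤ (borderRank (MM F n n (Nat.ceil ((n : ℝ) ^ κ))) : ℝ) := by
      exact_mod_cast h1
    refine le_trans ?_ (le_trans h2 (hC n hn))
    push_cast
    exact le_refl _
  have hC1 : (1 : ℝ) ≤ C := by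
    have := hsq 1 (le_refl 1)
    simpa using this
  have h2τ : (0 : ℝ) < 2 - τ := by linarith
  obtain ⟨n, hn⟩ := exists_nat_gt (max 1 (C ^ (1 / (2 - τ) : ℝ)))
  have hn1 : (1 : ℝ) < (n : ℝ) := lt_of_le_of_lt (le_max_left _ _) hn
  have hnn : 1 ≤ n := by exact_mod_cast le_of_lt hn1
  have hCx : C ^ (1 / (2 - τ) : ℝ) < (n : ℝ) := lt_of_le_of_lt (le_max_right _ _) hn
  have hCn : C < (n : ℝ) ^ (2 - τ : ℝ) := by
    have h1 : (C ^ (1 / (2 - τ) : ℝ)) ^ (2 - τ : ℝ) < (n : ℝ) ^ (2 - τ : ℝ) :=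
      Real.rpow_lt_rpow (Real.rpow_nonneg (by linarith) _) hCx h2τ
    rwa [← Real.rpow_mul (by linarith : (0:ℝ) ≤ C), one_div_mul_cancel (ne_of_gt h2τ),
      Real.rpow_one] at h1
  have hfin : C * (n : ℝ) ^ τ < (n : ℝ) * (n : ℝ) := by
    have h1 : C * (n : ℝ) ^ τ < (n : ℝ) ^ (2 - τ : ℝ) * (n : ℝ) ^ τ :=
      mul_lt_mul_of_pos_right hCn (Real.rpow_pos_of_pos (by linarith) τ)
    have h2 : (n : ℝ) ^ (2 - τ : ℝ) * (n : ℝ) ^ τ = (n : ℝ) * (n : ℝ) := by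
      rw [← Real.rpow_add (by linarith : (0:ℝ) < (n:ℝ))]
      rw [show (2 - τ + τ : ℝ) = ((2 : ℕ) : ℝ) by norm_num, Real.rpow_natCast]
      ring
    linarith [h1, h2.le, h2.ge]
  exact absurd (hsq n hnn) (not_le.mpr hfin)

lemma omega_le_main {κ : ℝ} (hκ : 0 ≤ κ) {r m P R : ℕ}
    (hm : 2 ≤ m) (hr : 1 ≤ r) (hPc : ((m : ℝ)) ^ κ ≤ (P : ℝ)) (hR : 1 ≤ R)
    (hkey : ∀ N a b : ℕ, borderRank (MM F a a b) ≤ r ^ N →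
      borderRank (MM F (a * m ^ N) (a * m ^ N) (b * P ^ N)) ≤ R ^ N) :
    omegaExp F κ ≤ Real.logb m R - Real.logb m r := by
  rw [omegaExp_eq]
  set ρ : ℝ := Real.logb m r with hρdef
  set L : ℝ := Real.logb m R with hLdef
  have hm1 : (1 : ℝ) < (m : ℝ) := by
    exact_mod_cast lt_of_lt_of_le one_lt_two (by exact_mod_cast hm)
  have hr1 : (1 : ℝ) ≤ (r : ℝ) := by exact_mod_cast hr
  have hR1 : (1 : ℝ) ≤ (R : ℝ) := by exact_mod_cast hR
  have hρ0 : 0 ≤ ρ := Real.logb_nonneg hm1 hr1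
  have hL0 : 0 ≤ L := Real.logb_nonneg hm1 hR1
  have hne : (SS F κ).Nonempty := ⟨2 + κ, SS_trivial hκ⟩
  have hbdd : BddBelow (SS F κ) := ⟨2, fun τ hτ => SS_ge_two τ hτ⟩
  set ω := sInf (SS F κ) with hωdef
  have hω2 : (2 : ℝ) ≤ ω := le_csInf hne fun τ hτ => SS_ge_two τ hτ
  by_contra hcon
  push_neg at hcon
  -- hcon : L - ρ < ω
  have hfam : ∀ ε : ℝ, 0 < ε → ω * (ω + ε + ρ) ≤ (ω + ε) * L := by
    intro ε hε
    obtain ⟨τ, hτSS, hτlt⟩ := exists_lt_of_csInf_lt hne (by linarith : sInf (SS F κ) < ω + ε)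
    have hτ2 : (2 : ℝ) ≤ τ := SS_ge_two τ hτSS
    have hτρ : (0 : ℝ) < τ + ρ := by linarith
    have hmem := SS_claim hκ hm hr hPc hR hkey hτ2 hτSS
    have hωle : ω ≤ max (L - ρ) (τ * L / (τ + ρ)) := csInf_le hbdd hmem
    have hω3 : ω ≤ τ * L / (τ + ρ) := by
      rcases max_cases (L - ρ) (τ * L / (τ + ρ)) with ⟨heq, _⟩ | ⟨heq, _⟩
      · rw [heq] at hωle; linarith
      · rw [heq] at hωle; exact hωle
    have hdiv : ω * (τ + ρ) ≤ τ * L := by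
      rw [le_div_iff₀ hτρ] at hω3
      linarith
    have hωL : ω ≤ L := by
      have h1 : τ * L / (τ + ρ) ≤ L := by
        rw [div_le_iff₀ hτρ]
        nlinarith
      linarith
    nlinarith [hdiv, mul_nonneg (by linarith : (0:ℝ) ≤ ω + ε - τ)
      (by linarith : (0:ℝ) ≤ L - ω)]
  have hfin : ω * (ω + ρ) ≤ ω * L := by
    refine le_of_forall_pos_le_add ?_
    intro ε hε
    have hε' : (0 : ℝ) < ε / (L + 1) := by positivity
    have h1 := hfam (ε / (L + 1)) hε'
    have hε'L : (ε / (L + 1)) * L ≤ ε := by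
      rw [div_mul_eq_mul_div, div_le_iff₀ (by linarith : (0:ℝ) < L + 1)]
      nlinarith
    nlinarith [mul_nonneg (by linarith : (0:ℝ) ≤ ω) (le_of_lt hε')]
  have : ω + ρ ≤ L := le_of_mul_le_mul_left hfin (by linarith : (0:ℝ) < ω)
  linarith

end Endgame

/-- Schönhage's asymptotic sum inequality (rectangular version): if `t` can be
converted, by zeroing out variables, into a direct sum of `r` pairwise
variable-disjoint terms, each isomorphic to `⟨m,m,P_l⟩` with `P_l ≥ m^κ`
(i.e. `⟨m,m,m^{s_l}⟩` with `s_l ≥ κ`), then `r · m^{ω(κ)} ≤ R̲(t)`. -/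
theorem stmt8 {F : Type*} [Field F] {ι₁ ι₂ ι₃ : Type*}
    [Fintype ι₁] [Fintype ι₂] [Fintype ι₃]
    [DecidableEq ι₁] [DecidableEq ι₂] [DecidableEq ι₃]
    (t : Tensor F ι₁ ι₂ ι₃) (κ : ℝ) (hκ : 0 ≤ κ) (r m : ℕ)
    (Sx : Fin r → Finset ι₁) (Sy : Fin r → Finset ι₂) (Sz : Fin r → Finset ι₃)
    (hdx : ∀ l l', l ≠ l' → Disjoint (Sx l) (Sx l'))
    (hdy : ∀ l l', l ≠ l' → Disjoint (Sy l) (Sy l'))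
    (hdz : ∀ l l', l ≠ l' → Disjoint (Sz l) (Sz l'))
    (hcross : ∀ l l' l'' : Fin r, ¬(l = l' ∧ l' = l'') →
      ∀ i ∈ Sx l, ∀ j ∈ Sy l', ∀ k ∈ Sz l'', t i j k = 0)
    (P : Fin r → ℕ) (hP : ∀ l, ((m : ℝ)) ^ κ ≤ (P l : ℝ))
    (hiso : ∀ l, TIso (fun (i : ↥(Sx l)) (j : ↥(Sy l)) (k : ↥(Sz l)) =>
      t (i : ι₁) (j : ι₂) (k : ι₃)) (MM F m m (P l))) :
    (r : ℝ) * (m : ℝ) ^ (omegaExp F κ) ≤ (borderRank t : ℝ) := by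
  rcases Nat.eq_zero_or_pos r with rfl | hr
  · simp only [Nat.cast_zero, zero_mul]
    positivity
  -- choose the minimal P
  obtain ⟨l₀, -, hl₀⟩ := Finset.exists_min_image (Finset.univ : Finset (Fin r)) P
    ⟨⟨0, hr⟩, Finset.mem_univ _⟩
  set Pm := P l₀ with hPmdef
  have hPmc : ((m : ℝ)) ^ κ ≤ (Pm : ℝ) := hP l₀
  have hPmle : ∀ l, Pm ≤ P l := fun l => hl₀ l (Finset.mem_univ _)
  have hdeg : Degen t (tmul (diagT F r) (MM F m m Pm)) :=
    degen_blocks t r m Sx Sy Sz hcross P hiso Pm hPmle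
  have hD : BorderDecomp (tmul (diagT F r) (MM F m m Pm)) (borderRank t) :=
    (borderDecomp_borderRank t).of_degen hdeg
  have hω2 : (2 : ℝ) ≤ omegaExp F κ := by
    rw [omegaExp_eq]
    exact le_csInf ⟨2 + κ, SS_trivial hκ⟩ fun τ hτ => SS_ge_two τ hτ
  rcases Nat.eq_zero_or_pos m with rfl | hm1
  · rw [Nat.cast_zero, Real.zero_rpow (by linarith : omegaExp F κ ≠ 0), mul_zero]
    positivity
  have hPm1 : 1 ≤ Pm := by
    have hm1r : (1 : ℝ) ≤ (m : ℝ) := by exact_mod_cast hm1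
    have h1 : (1 : ℝ) ≤ (m : ℝ) ^ κ := by
      rw [show (1 : ℝ) = (m : ℝ) ^ (0 : ℝ) from (Real.rpow_zero _).symm]
      exact Real.rpow_le_rpow_of_exponent_le hm1r hκ
    exact_mod_cast le_trans h1 hPmc
  have hRlow : r * (m * m) ≤ borderRank t :=
    le_trans (lb_diag_mm hPm1) (borderRank_le_of_degen hdeg)
  rcases Nat.lt_or_ge m 2 with hm2 | hm2
  · -- m = 1
    have hmeq : m = 1 := by omega
    subst hmeq
    rw [Nat.cast_one, Real.one_rpow, mul_one]
    have : r * (1 * 1) ≤ borderRank t := hRlow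
    exact_mod_cast by omega
  -- main case : m ≥ 2
  have hR1 : 1 ≤ borderRank t := by
    have h1 : 0 < r * (m * m) := Nat.mul_pos hr (Nat.mul_pos hm1 hm1)
    omega
  have hkey : ∀ N a b : ℕ, borderRank (MM F a a b) ≤ r ^ N →
      borderRank (MM F (a * m ^ N) (a * m ^ N) (b * Pm ^ N)) ≤ (borderRank t) ^ N :=
    fun N a b hab => borderRank_le_of_decomp
      (key_prop hD N a b (borderDecomp_of_le hab))
  have homega : omegaExp F κ ≤ Real.logb m (borderRank t) - Real.logb m r :=
    omega_le_main hκ hm2 hr hPmc hR1 hkey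
  -- convert to the final inequality
  have hm1' : (1 : ℝ) < (m : ℝ) := by
    exact_mod_cast lt_of_lt_of_le one_lt_two (by exact_mod_cast hm2)
  have hr0 : (0 : ℝ) < (r : ℝ) := by exact_mod_cast hr
  have hR0 : (0 : ℝ) < ((borderRank t : ℕ) : ℝ) := by exact_mod_cast hR1
  have hmono : (m : ℝ) ^ (omegaExp F κ)
      ≤ (m : ℝ) ^ (Real.logb m (borderRank t) - Real.logb m r) :=
    Real.rpow_le_rpow_of_exponent_le (le_of_lt hm1') homega
  have hval : (m : ℝ) ^ (Real.logb m (borderRank t) - Real.logb m r)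
      = ((borderRank t : ℕ) : ℝ) / (r : ℝ) := by
    rw [Real.rpow_sub (lt_trans one_pos hm1')]
    rw [Real.rpow_logb (lt_trans one_pos hm1') (ne_of_gt hm1') hR0]
    rw [Real.rpow_logb (lt_trans one_pos hm1') (ne_of_gt hm1') hr0]
  calc (r : ℝ) * (m : ℝ) ^ (omegaExp F κ)
      ≤ (r : ℝ) * (((borderRank t : ℕ) : ℝ) / (r : ℝ)) := by
        rw [← hval]
        exact mul_le_mul_of_nonneg_left hmono (le_of_lt hr0)
    _ = ((borderRank t : ℕ) : ℝ) := by field_simp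
end
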